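/- arXiv:1105.0475 — 6 statements merged into one kernel-verified Lean document; each statement's English description precedes it below -/
import Mathlib

section
/- Let H be a finite solvable group whose order is divisible by two distinct primes p and q. Then H contains a subgroup K of exponent pq whose order is pq^a or p^a q for some positive integer a. Moreover, if the Sylow p-subgroups and the Sylow q-subgroups of H are both cyclic, then H contains a subgroup of order pq. -/
open Subgroup
open scoped Pointwise
open scoped commutatorElement

lemma pow_decomp {H : Type*} [Group H] (N : Subgroup H) [N.Normal]
    {n y : H} (hn : n ∈ N) (k : ℕ) : ∃ m ∈ N, (n * y) ^ k = m * y ^ k := by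
  induction k with
  | zero => exact ⟨1, N.one_mem, by simp⟩
  | succ k ih =>
    obtain ⟨m, hm, hmk⟩ := ih
    refine ⟨m * (y ^ k * n * (y ^ k)⁻¹),
      N.mul_mem hm (Subgroup.Normal.conj_mem ‹N.Normal› n hn _), ?_⟩
    rw [pow_succ, hmk]
    group

lemma caseB {H : Type*} [Group H] [Finite H] {p q : ℕ} (hp : p.Prime) (hq : q.Prime)
    (hpq : p ≠ q) (N : Subgroup H) [N.Normal] (hN1 : N ≠ ⊥) (hNq : ∀ g ∈ N, g ^ q = 1)
    (x : H) (hx : orderOf x = p) :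
    ∃ K : Subgroup H, Monoid.exponent K = p * q ∧ ∃ a : ℕ, 0 < a ∧ Nat.card K = p * q ^ a := by
  haveI := Fact.mk hq
  set K : Subgroup H := N ⊔ zpowers x with hK
  have hNK : N ≤ K := le_sup_left
  have hxK : x ∈ K := Subgroup.mem_sup_right (Subgroup.mem_zpowers x)
  -- decomposition of elements of K
  have hdec : ∀ g ∈ K, ∃ n ∈ N, ∃ i : ℤ, g = n * x ^ i := by
    intro g hg
    have hmem : g ∈ ((N : Set H) * ((zpowers x : Subgroup H) : Set H)) := by
      rw [← Subgroup.normal_mul]; exact hg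
    obtain ⟨n, hn, b, hb, rfl⟩ := hmem
    obtain ⟨i, rfl⟩ := hb
    exact ⟨n, hn, i, rfl⟩
  -- g^p ∈ N for g ∈ K
  have hgp : ∀ g ∈ K, g ^ p ∈ N := by
    intro g hg
    obtain ⟨n, hn, i, rfl⟩ := hdec g hg
    obtain ⟨m, hm, hmk⟩ := pow_decomp N hn p
    rw [hmk]
    have hxip : (x ^ i) ^ p = 1 := by
      rw [← zpow_natCast, ← zpow_mul, mul_comm, zpow_mul, zpow_natCast, ← hx,
        pow_orderOf_eq_one, one_zpow]
    rw [hxip, mul_one]; exact hm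
  -- N is a q-group of order q^b, b ≥ 1
  have hNpg : IsPGroup q N := fun g => ⟨1, by
    have := hNq g g.2
    ext
    simpa using this⟩
  obtain ⟨b, hb⟩ := (IsPGroup.iff_card (p := q) (G := ↥N)).mp hNpg
  have hb1 : 0 < b := by
    rcases Nat.eq_zero_or_pos b with h0 | h; swap; · exact h
    rw [h0, pow_zero] at hb
    have := (Subgroup.one_lt_card_iff_ne_bot N).mpr hN1
    omega
  -- x as element of K
  set x' : K := ⟨x, hxK⟩ with hx'
  have hx'ord : orderOf x' = p := by
    rw [← orderOf_injective K.subtype K.subtype_injective x']; exact hx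
  set N' : Subgroup K := N.subgroupOf K with hN'
  have hcardN' : Nat.card N' = q ^ b := by
    rw [← hb]; exact Nat.card_congr (Subgroup.subgroupOfEquivOfLe hNK).toEquiv
  -- quotient is generated by image of x
  have hgen : ∀ g : K ⧸ N', g ∈ zpowers ((x' : K ⧸ N')) := by
    intro g
    obtain ⟨k, rfl⟩ := QuotientGroup.mk_surjective g
    obtain ⟨n, hn, i, hki⟩ := hdec (k : H) k.2
    have hk : k = (⟨n, hNK hn⟩ : K) * x' ^ i := by
      ext; simpa using hki
    have hone : ((⟨n, hNK hn⟩ : K) : K ⧸ N') = 1 := by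
      rw [QuotientGroup.eq_one_iff]
      simpa [hN', Subgroup.mem_subgroupOf] using hn
    exact ⟨i, by rw [hk, QuotientGroup.mk_mul, hone, one_mul, QuotientGroup.mk_zpow]⟩
  have hQdvd : Nat.card (K ⧸ N') ∣ p := by
    have htop : zpowers ((x' : K ⧸ N')) = ⊤ := by
      rw [Subgroup.eq_top_iff']; exact hgen
    have h1 : Nat.card (K ⧸ N') = orderOf ((x' : K ⧸ N')) := by
      rw [← Nat.card_zpowers, htop, Subgroup.card_top]
    rw [h1, ← hx'ord]
    exact orderOf_map_dvd (QuotientGroup.mk' N') x'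
  have hKcard0 : Nat.card (K ⧸ N') * q ^ b = Nat.card K := by
    rw [← hcardN', ← Subgroup.index_eq_card]
    exact N'.index_mul_card
  have hpK : p ∣ Nat.card K := hx'ord ▸ orderOf_dvd_natCard x'
  have hcop : Nat.Coprime p (q ^ b) :=
    Nat.Coprime.pow_right b ((Nat.coprime_primes hp hq).mpr hpq)
  have hpQ : p ∣ Nat.card (K ⧸ N') :=
    hcop.dvd_of_dvd_mul_right (hKcard0 ▸ hpK)
  have hQp : Nat.card (K ⧸ N') = p := Nat.dvd_antisymm hQdvd hpQ
  have hKcard : Nat.card K = p * q ^ b := by rw [← hKcard0, hQp]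
  -- exponent
  have hexp_dvd : Monoid.exponent K ∣ p * q :=
    Monoid.exponent_dvd_of_forall_pow_eq_one fun g => by
      have h2 : ((g : H) ^ p) ^ q = 1 := hNq _ (hgp g g.2)
      ext
      simpa [pow_mul] using h2
  have hp_dvd : p ∣ Monoid.exponent K := hx'ord ▸ Monoid.order_dvd_exponent x'
  have hq_dvd : q ∣ Monoid.exponent K := by
    obtain ⟨n₀, hn₀, hne⟩ := N.bot_or_exists_ne_one.resolve_left hN1
    set n' : K := ⟨n₀, hNK hn₀⟩ with hn'
    have hord : orderOf n' ∣ q := by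
      rw [orderOf_dvd_iff_pow_eq_one]
      ext
      simpa using hNq n₀ hn₀
    have hord1 : orderOf n' ≠ 1 := by
      rw [Ne, orderOf_eq_one_iff]
      intro h
      exact hne (by simpa [hn'] using congrArg (K.subtype) h)
    have hordq : orderOf n' = q := (hq.eq_one_or_self_of_dvd _ hord).resolve_left hord1
    exact hordq ▸ Monoid.order_dvd_exponent n'
  have hexp : Monoid.exponent K = p * q :=
    Nat.dvd_antisymm hexp_dvd
      (Nat.Coprime.mul_dvd_of_dvd_of_dvd ((Nat.coprime_primes hp hq).mpr hpq) hp_dvd hq_dvd)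
  exact ⟨K, hexp, b, hb1, hKcard⟩
universe u

theorem part1 : ∀ (n : ℕ) (H : Type u) [Group H] [Finite H] [Group.IsSolvable H],
    Nat.card H ≤ n → ∀ p q : ℕ, p.Prime → q.Prime → p ≠ q →
    p ∣ Nat.card H → q ∣ Nat.card H →
    ∃ K : Subgroup H, Monoid.exponent K = p * q ∧
      ∃ a : ℕ, 0 < a ∧ (Nat.card K = p * q ^ a ∨ Nat.card K = p ^ a * q) := by
  intro n
  induction n with
  | zero =>
    intro H _ _ _ hle
    have : 0 < Nat.card H := Nat.card_pos
    omega
  | succ n ih =>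
    intro H _ _ _ hle p q hp hq hpq hpd hqd
    haveI := Fact.mk hp
    haveI := Fact.mk hq
    have hcard1 : 1 < Nat.card H := by
      have hpos : 0 < Nat.card H := Nat.card_pos
      rcases Nat.lt_or_ge 1 (Nat.card H) with h | h
      · exact h
      · exact absurd (Nat.dvd_one.mp ((le_antisymm h hpos) ▸ hpd)) hp.ne_one
    haveI : Nontrivial H := Finite.one_lt_card_iff_nontrivial.mp hcard1
    classical
    obtain ⟨nn, hnn⟩ := (inferInstance : Group.IsSolvable H)
    have hP : ∃ m, derivedSeries H m = ⊥ := ⟨nn, hnn⟩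
    set m := Nat.find hP with hmdef
    have hm : derivedSeries H m = ⊥ := Nat.find_spec hP
    have hm0 : m ≠ 0 := by
      intro h0
      rw [h0, derivedSeries_zero] at hm
      exact top_ne_bot hm
    set A : Subgroup H := derivedSeries H (m - 1) with hA
    haveI hAnormal : A.Normal := derivedSeries_normal H (m - 1)
    have hAne : A ≠ ⊥ := Nat.find_min hP (Nat.pred_lt hm0)
    have hsucc : derivedSeries H (m - 1 + 1) = ⊥ := by
      rw [Nat.sub_add_cancel (Nat.one_le_iff_ne_zero.mpr hm0)]; exact hm
    have hAab : ∀ a ∈ A, ∀ c ∈ A, a * c = c * a := by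
      intro a ha c hc
      have hcm : ⁅a, c⁆ ∈ derivedSeries H (m - 1 + 1) := by
        rw [derivedSeries_succ]
        exact Subgroup.commutator_mem_commutator ha hc
      rw [hsucc, Subgroup.mem_bot] at hcm
      exact (commutatorElement_eq_one_iff_mul_comm.mp hcm)
    have hcA : 1 < Nat.card A := (Subgroup.one_lt_card_iff_ne_bot A).mpr hAne
    set r := (Nat.card A).minFac with hrdef
    have hr : r.Prime := Nat.minFac_prime (by omega)
    haveI := Fact.mk hr
    obtain ⟨y, hy⟩ := exists_prime_orderOf_dvd_card' (G := A) r (Nat.minFac_dvd _)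
    set N : Subgroup H :=
      { carrier := {h | h ∈ A ∧ h ^ r = 1}
        one_mem' := ⟨A.one_mem, one_pow r⟩
        mul_mem' := by
          rintro a c ⟨ha, ha1⟩ ⟨hc, hc1⟩
          refine ⟨A.mul_mem ha hc, ?_⟩
          have hcomm : Commute a c := hAab a ha c hc
          rw [hcomm.mul_pow, ha1, hc1, one_mul]
        inv_mem' := by
          rintro a ⟨ha, ha1⟩
          exact ⟨A.inv_mem ha, by rw [inv_pow, ha1, inv_one]⟩ } with hNdef
    haveI hNnormal : N.Normal := by
      constructor
      intro nn1 hnn1 g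
      exact ⟨hAnormal.conj_mem nn1 hnn1.1 g, by rw [conj_pow, hnn1.2, mul_one, mul_inv_cancel]⟩
    have hymem : (y : H) ∈ N := by
      refine ⟨y.2, ?_⟩
      have hyr : y ^ r = 1 := by rw [← hy]; exact pow_orderOf_eq_one y
      simpa using congrArg (A.subtype) hyr
    have hyne : (y : H) ≠ 1 := by
      intro h
      have h1 : y = 1 := Subtype.ext h
      rw [h1, orderOf_one] at hy
      exact hr.ne_one hy.symm
    have hN1 : N ≠ ⊥ := by
      intro h
      rw [h, Subgroup.mem_bot] at hymem
      exact hyne hymem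
    have hNr : ∀ g ∈ N, g ^ r = 1 := fun g hg => hg.2
    by_cases hrq : r = q
    · subst hrq
      obtain ⟨x, hxp⟩ := exists_prime_orderOf_dvd_card' (G := H) p hpd
      obtain ⟨K, hK1, a, ha, hK2⟩ := caseB hp hr hpq N hN1 hNr x hxp
      exact ⟨K, hK1, a, ha, Or.inl hK2⟩
    by_cases hrp : r = p
    · subst hrp
      obtain ⟨x, hxq⟩ := exists_prime_orderOf_dvd_card' (G := H) q hqd
      obtain ⟨K, hK1, a, ha, hK2⟩ := caseB hq hr (Ne.symm hpq) N hN1 hNr x hxq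
      exact ⟨K, by rw [hK1, mul_comm], a, ha, Or.inr (by rw [hK2, mul_comm])⟩
    · -- r ∉ {p, q} : pass to the quotient
      have hNpg : IsPGroup r N := fun g => ⟨1, by
        have := hNr g g.2
        ext
        simpa using this⟩
      obtain ⟨bb, hbb⟩ := (IsPGroup.iff_card (p := r) (G := N)).mp hNpg
      have hcards : N.index * Nat.card N = Nat.card H := N.index_mul_card
      have hindex : N.index = Nat.card (H ⧸ N) := Subgroup.index_eq_card N
      have hcrp : Nat.Coprime r p := (Nat.coprime_primes hr hp).mpr hrp
      have hcrq : Nat.Coprime r q := (Nat.coprime_primes hr hq).mpr hrq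
      have hpQ : p ∣ Nat.card (H ⧸ N) := by
        have h1 : p ∣ N.index * Nat.card N := hcards ▸ hpd
        rw [hbb] at h1
        rw [← hindex]
        exact ((hcrp.pow_left bb).symm.dvd_of_dvd_mul_right h1)
      have hqQ : q ∣ Nat.card (H ⧸ N) := by
        have h1 : q ∣ N.index * Nat.card N := hcards ▸ hqd
        rw [hbb] at h1
        rw [← hindex]
        exact ((hcrq.pow_left bb).symm.dvd_of_dvd_mul_right h1)
      have hlt : Nat.card (H ⧸ N) < Nat.card H := by
        have hposQ : 0 < Nat.card (H ⧸ N) := Nat.card_pos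
        have h2 : 1 < Nat.card N := (Subgroup.one_lt_card_iff_ne_bot N).mpr hN1
        calc Nat.card (H ⧸ N) = Nat.card (H ⧸ N) * 1 := (mul_one _).symm
          _ < Nat.card (H ⧸ N) * Nat.card N := by
              nlinarith
          _ = Nat.card H := by rw [← hindex]; exact hcards
      obtain ⟨Kb, hKb1, a, ha, hKb2⟩ := ih (H ⧸ N) (by omega) p q hp hq hpq hpQ hqQ
      set π := QuotientGroup.mk' N with hπ
      set K' : Subgroup H := Subgroup.comap π Kb with hK'
      have hNK' : N ≤ K' := by
        intro g hg
        show π g ∈ Kb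
        have h1 : π g = 1 := (QuotientGroup.eq_one_iff g).mpr hg
        rw [h1]; exact Kb.one_mem
      set N'' : Subgroup K' := N.subgroupOf K' with hN''
      have hcardN'' : Nat.card N'' = r ^ bb := by
        rw [← hbb]
        exact Nat.card_congr (Subgroup.subgroupOfEquivOfLe hNK').toEquiv
      have hres : (π.domRestrict K').ker = N'' := by
        rw [MonoidHom.ker_domRestrict, QuotientGroup.ker_mk']
      have hidx : N''.index = Nat.card Kb := by
        rw [← hres, Subgroup.index_ker, MonoidHom.domRestrict_range,
          Subgroup.map_comap_eq_self_of_surjective (QuotientGroup.mk'_surjective N)]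
      have hcop : Nat.Coprime (Nat.card N'') N''.index := by
        rw [hcardN'', hidx]
        rcases hKb2 with h | h <;> rw [h]
        · exact (Nat.Coprime.mul_right hcrp (hcrq.pow_right a)).pow_left bb
        · exact (Nat.Coprime.mul_right (hcrp.pow_right a) hcrq).pow_left bb
      obtain ⟨C, hC⟩ := Subgroup.exists_right_complement'_of_coprime hcop
      have hcardC : Nat.card C = Nat.card Kb := by
        rw [← hC.symm.index_eq_card, hidx]
      have hCpow : ∀ g : C, g ^ (p * q) = 1 := by
        intro g
        have hmemC : ((g : K') ^ (p * q) : K') ∈ C := C.pow_mem g.2 (p * q)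
        have hmemN : ((g : K') ^ (p * q) : K') ∈ N'' := by
          rw [hN'', Subgroup.mem_subgroupOf]
          have hK : π ((g : K') : H) ∈ Kb := (g : K').2
          have h2 : (⟨π ((g : K') : H), hK⟩ : Kb) ^ (p * q) = 1 := by
            rw [← hKb1]; exact Monoid.pow_exponent_eq_one _
          have h3 : π (((g : K') : H) ^ (p * q)) = 1 := by
            have h4 := congrArg (Kb.subtype) h2
            simpa [map_pow] using h4
          have h5 : ((g : K') : H) ^ (p * q) ∈ N := by
            rw [← QuotientGroup.ker_mk' N, MonoidHom.mem_ker]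
            exact h3
          simpa using h5
        have h6 : ((g : K') ^ (p * q) : K') = 1 :=
          Subgroup.disjoint_def.mp hC.disjoint hmemN hmemC
        exact Subtype.ext (by simpa using h6)
      have hexpC_dvd : Monoid.exponent C ∣ p * q :=
        Monoid.exponent_dvd_of_forall_pow_eq_one hCpow
      have hpC : p ∣ Nat.card C := by
        rw [hcardC]
        rcases hKb2 with h | h <;> rw [h]
        · exact ⟨q ^ a, rfl⟩
        · exact Dvd.dvd.mul_right (dvd_pow_self p ha.ne') q
      have hqC : q ∣ Nat.card C := by
        rw [hcardC]
        rcases hKb2 with h | h <;> rw [h]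
        · exact Dvd.dvd.mul_left (dvd_pow_self q ha.ne') p
        · exact ⟨p ^ a, mul_comm _ _⟩
      obtain ⟨cp, hcp⟩ := exists_prime_orderOf_dvd_card' (G := C) p hpC
      obtain ⟨cq, hcq⟩ := exists_prime_orderOf_dvd_card' (G := C) q hqC
      have hexpC : Monoid.exponent C = p * q :=
        Nat.dvd_antisymm hexpC_dvd
          (Nat.Coprime.mul_dvd_of_dvd_of_dvd ((Nat.coprime_primes hp hq).mpr hpq)
            (hcp ▸ Monoid.order_dvd_exponent cp) (hcq ▸ Monoid.order_dvd_exponent cq))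
      refine ⟨Subgroup.map K'.subtype C, ?_, a, ha, ?_⟩
      · rw [← hexpC]
        exact (Monoid.exponent_eq_of_mulEquiv
          (Subgroup.equivMapOfInjective C K'.subtype K'.subtype_injective)).symm
      · have hcc : Nat.card (Subgroup.map K'.subtype C) = Nat.card Kb := by
          rw [← hcardC]
          exact (Nat.card_congr
            (Subgroup.equivMapOfInjective C K'.subtype K'.subtype_injective).toEquiv).symm
        rw [hcc]
        exact hKb2

lemma helperCyc {H : Type*} [Group H] [Finite H] {p q : ℕ} (hp : p.Prime) (hq : q.Prime)
    (hpq : p ≠ q) (K : Subgroup H) (hexp : Monoid.exponent K = p * q) {a : ℕ} (ha : 0 < a)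
    (hcard : Nat.card K = p * q ^ a)
    (hcyc : ∀ Q : Sylow q H, IsCyclic Q) : Nat.card K = p * q := by
  haveI := Fact.mk hq
  obtain ⟨S⟩ : Nonempty (Sylow q K) := inferInstance
  have hfac : (Nat.card K).factorization q = a := by
    rw [hcard, Nat.factorization_mul hp.pos.ne' (pow_ne_zero a hq.pos.ne'),
      hq.factorization_pow]
    have hqp : ¬ q ∣ p := fun h => hpq (((Nat.prime_dvd_prime_iff_eq hq hp).mp h)).symm
    simp [Nat.factorization_eq_zero_of_not_dvd hqp]
  have hScard : Nat.card (S : Subgroup K) = q ^ a := by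
    rw [S.card_eq_multiplicity, hfac]
  have hle := ((S : Subgroup K).map K.subtype)
  have hmap : IsPGroup q ((S : Subgroup K).map K.subtype) := S.2.map K.subtype
  obtain ⟨Qs, hQs⟩ := hmap.exists_le_sylow
  haveI := hcyc Qs
  haveI : IsCyclic (((S : Subgroup K).map K.subtype).subgroupOf Qs) := Subgroup.isCyclic _
  have hcycS : IsCyclic (S : Subgroup K) := by
    have e1 := Subgroup.equivMapOfInjective (S : Subgroup K) K.subtype K.subtype_injective
    have e2 := Subgroup.subgroupOfEquivOfLe hQs
    exact isCyclic_of_surjective (e2.trans e1.symm) (e2.trans e1.symm).surjective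
  have h1 : q ^ a = Monoid.exponent (S : Subgroup K) := by
    haveI := hcycS
    rw [← hScard]; exact IsCyclic.exponent_eq_card.symm
  have h2 : Monoid.exponent (S : Subgroup K) ∣ p * q :=
    Monoid.exponent_dvd_of_forall_pow_eq_one fun g => by
      have h3 : ((g : K)) ^ (p * q) = 1 := by
        rw [← hexp]; exact Monoid.pow_exponent_eq_one _
      exact Subtype.ext (by simpa using h3)
  have h3 : q ^ a ∣ p * q := h1 ▸ h2
  have ha1 : a = 1 := by
    by_contra hne
    have h2a : 2 ≤ a := by omega
    have h4 : q ^ 2 ∣ p * q := dvd_trans (pow_dvd_pow q h2a) h3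
    have h5 : q ∣ p := by
      rwa [pow_two, Nat.mul_dvd_mul_iff_right hq.pos] at h4
    exact hpq (((Nat.prime_dvd_prime_iff_eq hq hp).mp h5)).symm
  rw [hcard, ha1, pow_one]


/-- Lemma 3.1: A finite solvable group `H` of order divisible by distinct primes `p, q`
contains a subgroup of exponent `pq` and order `pq^a` or `p^a q`; moreover, if the
Sylow `p`- and `q`-subgroups of `H` are both cyclic, then `H` has a subgroup of
order `pq`. -/
theorem stmt_7 {H : Type*} [Group H] [Finite H] [Group.IsSolvable H]
    {p q : ℕ} (hp : p.Prime) (hq : q.Prime) (hpq : p ≠ q)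
    (hpd : p ∣ Nat.card H) (hqd : q ∣ Nat.card H) :
    (∃ K : Subgroup H, Monoid.exponent K = p * q ∧
      ∃ a : ℕ, 0 < a ∧ (Nat.card K = p * q ^ a ∨ Nat.card K = p ^ a * q)) ∧
    ((∀ P : Sylow p H, IsCyclic P) → (∀ Q : Sylow q H, IsCyclic Q) →
      ∃ K : Subgroup H, Nat.card K = p * q) := by
  obtain ⟨K, hK1, a, ha, hK2⟩ :=
    part1 (Nat.card H) H (le_refl _) p q hp hq hpq hpd hqd
  refine ⟨⟨K, hK1, a, ha, hK2⟩, ?_⟩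
  intro hcycP hcycQ
  rcases hK2 with h | h
  · exact ⟨K, helperCyc hp hq hpq K hK1 ha h hcycQ⟩
  · have h' : Nat.card K = q * p ^ a := by rw [h, mul_comm]
    have := helperCyc hq hp (Ne.symm hpq) K (by rw [hK1, mul_comm]) ha h' hcycP
    exact ⟨K, by rw [this, mul_comm]⟩
end

section
/- Let H be a finite group and let p and q be distinct primes dividing the order of H. Assume that: (1) the Sylow q-subgroups of H are cyclic, and the Sylow p-subgroups of H have order p^s; (2) p does not divide q − 1; (3) for every integer m with 1 ≤ m ≤ s, q does not divide p^m − 1; and (4) H contains no element of order pq. Then H contains no subgroup of order p^a q^b with a > 0 and b > 0; in particular, H is not solvable. -/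
open Subgroup

universe u
theorem aux_core {G : Type*} [Group G] [Finite G] {p q a b s : ℕ}
    (hp : p.Prime) (hq : q.Prime) (hpq : p ≠ q)
    (hcard : Nat.card G = p ^ a * q ^ b) (ha : 0 < a) (hb : 0 < b) (has : a ≤ s)
    (hcyc : ∀ Q : Sylow q G, IsCyclic Q)
    (h2 : ¬ p ∣ (q - 1))
    (h3 : ∀ m : ℕ, 1 ≤ m → m ≤ s → ¬ q ∣ (p ^ m - 1)) :
    ∃ x : G, orderOf x = p * q := by
  haveI : Fact p.Prime := ⟨hp⟩
  haveI : Fact q.Prime := ⟨hq⟩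
  obtain ⟨Q⟩ : Nonempty (Sylow q G) := inferInstance
  have hfq : (Nat.card G).factorization q = b := by
    rw [hcard, Nat.factorization_mul (pow_ne_zero _ hp.pos.ne') (pow_ne_zero _ hq.pos.ne'),
      hp.factorization_pow, hq.factorization_pow]
    simp [Finsupp.single_apply, hpq]
  have hQcard : Nat.card Q = q ^ b := by rw [Sylow.card_eq_multiplicity, hfq]
  have hQind : (Q : Subgroup G).index = p ^ a := by
    have h := Subgroup.card_mul_index (Q : Subgroup G)
    rw [hQcard, hcard, mul_comm (p ^ a)] at h
    exact Nat.eq_of_mul_eq_mul_left (pow_pos hq.pos b) h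
  have hdvd : Nat.card (Sylow q G) ∣ p ^ a := hQind ▸ Q.card_dvd_index
  obtain ⟨m, hm, hcount⟩ := (Nat.dvd_prime_pow hp).mp hdvd
  have hmod := card_sylow_modEq_one q G
  have hm0 : m = 0 := by
    by_contra hm0
    apply h3 m (Nat.one_le_iff_ne_zero.mpr hm0) (hm.trans has)
    have hmm : p ^ m ≡ 1 [MOD q] := hcount ▸ hmod
    exact (Nat.modEq_iff_dvd' (Nat.one_le_pow _ _ hp.pos)).mp hmm.symm
  have hone : Nat.card (Sylow q G) = 1 := by rw [hcount, hm0, pow_zero]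
  have hidx : (Subgroup.normalizer (Q : Set G)).index = 1 := by
    rw [← Q.card_eq_index_normalizer]; exact hone
  haveI hnormQ : (Q : Subgroup G).Normal :=
    Subgroup.normalizer_eq_top_iff.mp (Subgroup.index_eq_one.mp hidx)
  haveI : IsCyclic Q := hcyc Q
  obtain ⟨x, hx⟩ := exists_prime_orderOf_dvd_card' (G := G) p
    (by rw [hcard]; exact dvd_mul_of_dvd_left (dvd_pow_self p ha.ne') _)
  have hcdvd : orderOf (MulAut.conjNormal x : MulAut (Q : Subgroup G)) ∣ p :=
    hx ▸ orderOf_map_dvd _ x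
  have hc1 : (MulAut.conjNormal x : MulAut (Q : Subgroup G)) = 1 := by
    by_contra h
    have hcp : orderOf (MulAut.conjNormal x : MulAut (Q : Subgroup G)) = p :=
      ((Nat.dvd_prime hp).mp hcdvd).resolve_left (by simpa [orderOf_eq_one_iff] using h)
    have hpd : p ∣ Nat.card (MulAut (Q : Subgroup G)) := hcp ▸ orderOf_dvd_natCard _
    rw [IsCyclic.card_mulAut, hQcard, Nat.totient_prime_pow hq hb] at hpd
    rcases hp.dvd_mul.mp hpd with h' | h'
    · exact hpq ((Nat.prime_dvd_prime_iff_eq hp hq).mp (hp.dvd_of_dvd_pow h'))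
    · exact h2 h'
  obtain ⟨y, hy⟩ := exists_prime_orderOf_dvd_card' (G := (Q : Subgroup G)) q
    (by rw [show Nat.card (Q : Subgroup G) = q ^ b from hQcard]; exact dvd_pow_self q hb.ne')
  have hyG : orderOf (y : G) = q := by rwa [Subgroup.orderOf_coe]
  have h5 : x * (y : G) * x⁻¹ = y := by
    have := congrArg (fun f : MulAut (Q : Subgroup G) => ((f y : (Q : Subgroup G)) : G)) hc1
    simpa [MulAut.conjNormal_apply] using this
  have hcomm : Commute x (y : G) := by
    have h6 := congrArg (· * x) h5
    exact (by simpa [mul_assoc] using h6 : x * (y : G) = y * x)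
  refine ⟨x * y, ?_⟩
  rw [hcomm.orderOf_mul_eq_mul_orderOf_of_coprime (by rw [hx, hyG]; exact (Nat.coprime_primes hp hq).mpr hpq), hx, hyG]

theorem aux_sup {G : Type*} [Group G] [Finite G] (H N : Subgroup G) [N.Normal]
    (hcop : Nat.Coprime (Nat.card N) (Nat.card H)) :
    Nat.card ↥(H ⊔ N) = Nat.card H * Nat.card N := by
  have hinf : N ⊓ H = ⊥ := inf_eq_bot_of_coprime hcop
  have hbot : N.subgroupOf H = ⊥ := by
    rw [eq_bot_iff]
    intro x hx
    have hx2 : (x : G) ∈ N ⊓ H := ⟨Subgroup.mem_subgroupOf.mp hx, x.2⟩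
    rw [hinf, Subgroup.mem_bot] at hx2
    exact Subgroup.mem_bot.mpr (Subtype.ext (by rw [hx2]; rfl))
  have e := QuotientGroup.quotientInfEquivProdNormalQuotient H N
  have h1 : Nat.card (↥(H ⊔ N) ⧸ N.subgroupOf (H ⊔ N)) = Nat.card H := by
    rw [← Nat.card_congr e.toEquiv]
    have hcb : Nat.card (N.subgroupOf H) = 1 := by rw [hbot]; exact Subgroup.card_bot
    have hh := Subgroup.card_eq_card_quotient_mul_card_subgroup (N.subgroupOf H)
    rw [hcb, mul_one] at hh
    exact hh.symm
  have h2 : Nat.card (N.subgroupOf (H ⊔ N)) = Nat.card N :=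
    Nat.card_congr (Subgroup.subgroupOfEquivOfLe le_sup_right).toEquiv
  rw [Subgroup.card_eq_card_quotient_mul_card_subgroup (N.subgroupOf (H ⊔ N)), h1, h2]



theorem aux_solv {p q : ℕ} (hp : p.Prime) (hq : q.Prime) (hpq : p ≠ q) :
    ∀ (n : ℕ) (G : Type u) (_ : Group G) (_ : Finite G), Nat.card G ≤ n → IsSolvable G →
      p ∣ Nat.card G → q ∣ Nat.card G →
      ∃ (B : Subgroup G) (a b : ℕ), 0 < a ∧ 0 < b ∧ Nat.card B = p ^ a * q ^ b := by
  intro n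
  induction n with
  | zero =>
    intro G _ _ hle _ hpd _
    exact absurd (Nat.le_zero.mp hle) Nat.card_pos.ne'
  | succ n IH =>
    intro G _ _ hle hsolv hpd hqd
    haveI : Fact p.Prime := ⟨hp⟩
    haveI : Fact q.Prime := ⟨hq⟩
    have hcpos : 0 < Nat.card G := Nat.card_pos
    have hnt : Nontrivial G := by
      have h1 := Nat.le_of_dvd hcpos hpd
      have h2 := hp.one_lt
      rw [← Finite.one_lt_card_iff_nontrivial]
      omega
    -- find the last nontrivial term of the derived series: abelian normal nontrivial A
    classical
    obtain ⟨k, hk⟩ := hsolv.solvable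
    have hex : ∃ m, derivedSeries G m = ⊥ := ⟨k, hk⟩
    set n₀ := Nat.find hex with hn₀
    have hbot : derivedSeries G n₀ = ⊥ := Nat.find_spec hex
    have hn₀pos : 0 < n₀ := by
      rcases Nat.eq_zero_or_pos n₀ with h | h
      case inr => exact h
      rw [h, derivedSeries_zero] at hbot
      exact absurd hbot top_ne_bot
    set A : Subgroup G := derivedSeries G (n₀ - 1) with hA
    have hAne : A ≠ ⊥ := Nat.find_min hex (Nat.sub_lt hn₀pos one_pos)
    haveI hAnorm : A.Normal := derivedSeries_normal G _
    have hAcomm : ∀ x ∈ A, ∀ y ∈ A, x * y = y * x := by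
      have hcomm : ⁅A, A⁆ = ⊥ := by
        rw [hA, ← derivedSeries_succ, Nat.sub_add_cancel hn₀pos]
        exact hbot
      intro x hx y hy
      exact (Subgroup.commutator_eq_bot_iff_le_centralizer.mp hcomm hx y hy).symm
    -- prime t dividing |A|, and T the Sylow t of A as a normal subgroup N of G
    have hA1 : 1 < Nat.card A := (Subgroup.one_lt_card_iff_ne_bot A).mpr hAne
    set t := (Nat.card A).minFac with ht
    have htp : t.Prime := Nat.minFac_prime hA1.ne'
    haveI : Fact t.Prime := ⟨htp⟩
    have htdvd : t ∣ Nat.card A := Nat.minFac_dvd _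
    obtain ⟨T⟩ : Nonempty (Sylow t A) := inferInstance
    have hTnorm : (T : Subgroup A).Normal := by
      constructor
      intro x hx g
      have : g * x * g⁻¹ = x := by
        have h1 : (g : G) * (x : G) = (x : G) * (g : G) :=
          hAcomm g g.2 x x.2
        ext
        push_cast
        rw [h1, mul_assoc, mul_inv_cancel, mul_one]
      rwa [this]
    haveI hTchar : (T : Subgroup A).Characteristic := Sylow.characteristic_of_normal T hTnorm
    set N : Subgroup G := (T : Subgroup A).map A.subtype with hN
    haveI hNnorm : N.Normal := ConjAct.normal_of_characteristic_of_normal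
    have hNcard : Nat.card N = Nat.card T :=
      (Nat.card_congr (Subgroup.equivMapOfInjective _ _ (subtype_injective A)).toEquiv).symm
    obtain ⟨m, hmcard⟩ := IsPGroup.iff_card.mp T.isPGroup'
    have hmpos : 0 < m := by
      rcases Nat.eq_zero_or_pos m with h | h
      case inr => exact h
      have := T.dvd_card_of_dvd_card htdvd
      rw [hmcard, h, pow_zero, Nat.dvd_one] at this
      exact absurd this htp.one_lt.ne'
    have hNcard' : Nat.card N = t ^ m := by rw [hNcard, hmcard]
    -- now split on t
    by_cases htpeq : t = p
    · -- N is a p-group; join with a Sylow q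
      obtain ⟨R⟩ : Nonempty (Sylow q G) := inferInstance
      obtain ⟨j, hjcard⟩ := IsPGroup.iff_card.mp R.isPGroup'
      have hjpos : 0 < j := by
        rcases Nat.eq_zero_or_pos j with h | h
        case inr => exact h
        have := R.dvd_card_of_dvd_card hqd
        rw [hjcard, h, pow_zero, Nat.dvd_one] at this
        exact absurd this hq.one_lt.ne'
      have hcop : Nat.Coprime (Nat.card N) (Nat.card R) := by
        rw [hNcard', hjcard]
        rw [htpeq]
        exact ((Nat.coprime_primes hp hq).mpr hpq).pow _ _
      refine ⟨(R : Subgroup G) ⊔ N, m, j, hmpos, hjpos, ?_⟩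
      rw [aux_sup _ _ hcop, hNcard', hjcard, htpeq, mul_comm]
    · by_cases htqeq : t = q
      · obtain ⟨R⟩ : Nonempty (Sylow p G) := inferInstance
        obtain ⟨j, hjcard⟩ := IsPGroup.iff_card.mp R.isPGroup'
        have hjpos : 0 < j := by
          rcases Nat.eq_zero_or_pos j with h | h
          case inr => exact h
          have := R.dvd_card_of_dvd_card hpd
          rw [hjcard, h, pow_zero, Nat.dvd_one] at this
          exact absurd this hp.one_lt.ne'
        have hcop : Nat.Coprime (Nat.card N) (Nat.card R) := by
          rw [hNcard', hjcard, htqeq]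
          exact ((Nat.coprime_primes hq hp).mpr (Ne.symm hpq)).pow _ _
        refine ⟨(R : Subgroup G) ⊔ N, j, m, hjpos, hmpos, ?_⟩
        rw [aux_sup _ _ hcop, hNcard', hjcard, htqeq]
      · -- t ∉ {p, q} : pass to the quotient
        have hGNcard : Nat.card G = Nat.card (G ⧸ N) * Nat.card N :=
          Subgroup.card_eq_card_quotient_mul_card_subgroup N
        have hpt : ¬ p ∣ Nat.card N := by
          rw [hNcard']
          intro h
          exact htpeq ((Nat.prime_dvd_prime_iff_eq hp htp).mp (hp.dvd_of_dvd_pow h)).symm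
        have hqt : ¬ q ∣ Nat.card N := by
          rw [hNcard']
          intro h
          exact htqeq ((Nat.prime_dvd_prime_iff_eq hq htp).mp (hq.dvd_of_dvd_pow h)).symm
        have hpq' : p ∣ Nat.card (G ⧸ N) :=
          ((Nat.Prime.dvd_mul hp).mp (hGNcard ▸ hpd)).resolve_right hpt
        have hqq' : q ∣ Nat.card (G ⧸ N) :=
          ((Nat.Prime.dvd_mul hq).mp (hGNcard ▸ hqd)).resolve_right hqt
        have hNbig : 2 ≤ Nat.card N := by
          rw [hNcard']
          calc 2 ≤ t := htp.two_le
          _ = t ^ 1 := (pow_one t).symm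
          _ ≤ t ^ m := Nat.pow_le_pow_right htp.pos hmpos
        have hquotpos : 0 < Nat.card (G ⧸ N) := Nat.card_pos
        have hquotle : Nat.card (G ⧸ N) ≤ n := by nlinarith [hGNcard, hle]
        obtain ⟨Bq, a, b, hapos, hbpos, hBqcard⟩ :=
          IH (G ⧸ N) inferInstance inferInstance hquotle (by haveI : Group.IsSolvable G := hsolv; exact Group.isSolvable_of_surjective (QuotientGroup.mk'_surjective N)) hpq' hqq'
        -- pull back
        set B' : Subgroup G := Bq.comap (QuotientGroup.mk' N) with hB'
        have hNle : N ≤ B' := by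
          intro x hx
          rw [hB', Subgroup.mem_comap]
          rw [show (QuotientGroup.mk' N) x = 1 from (QuotientGroup.eq_one_iff x).mpr hx]
          exact Bq.one_mem
        set φ : ↥B' →* ↥Bq :=
          ((QuotientGroup.mk' N).domRestrict B').codRestrict Bq
            (fun x => Subgroup.mem_comap.mp x.2) with hφ
        have hφsurj : Function.Surjective φ := by
          rintro ⟨ybar, hybar⟩
          obtain ⟨y, rfl⟩ := QuotientGroup.mk'_surjective N ybar
          exact ⟨⟨y, Subgroup.mem_comap.mpr hybar⟩, rfl⟩
        have hker : φ.ker = N.subgroupOf B' := by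
          ext x
          rw [MonoidHom.mem_ker, Subgroup.mem_subgroupOf]
          constructor
          · intro h
            have : (QuotientGroup.mk' N) (x : G) = 1 := congrArg Subtype.val h
            exact (QuotientGroup.eq_one_iff _).mp this
          · intro h
            exact Subtype.ext ((QuotientGroup.eq_one_iff _).mpr h)
        have hkercard : Nat.card φ.ker = Nat.card N := by
          rw [hker]
          exact Nat.card_congr (Subgroup.subgroupOfEquivOfLe hNle).toEquiv
        have hB'card : Nat.card B' = Nat.card Bq * Nat.card N := by
          rw [Subgroup.card_eq_card_quotient_mul_card_subgroup φ.ker, hkercard,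
            Nat.card_congr (QuotientGroup.quotientKerEquivOfSurjective φ hφsurj).toEquiv]
        -- Schur–Zassenhaus inside B'
        haveI : (N.subgroupOf B').Normal := Subgroup.normal_subgroupOf
        have hN'card : Nat.card (N.subgroupOf B') = Nat.card N :=
          Nat.card_congr (Subgroup.subgroupOfEquivOfLe hNle).toEquiv
        have hN'index : (N.subgroupOf B').index = Nat.card Bq := by
          have h := Subgroup.card_mul_index (N.subgroupOf B')
          rw [hN'card, hB'card, mul_comm (Nat.card ↥Bq)] at h
          exact Nat.eq_of_mul_eq_mul_left (Nat.card_pos) h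
        have hcop : Nat.Coprime (Nat.card (N.subgroupOf B')) (N.subgroupOf B').index := by
          rw [hN'card, hN'index, hNcard', hBqcard]
          have ctp : Nat.Coprime t p := (Nat.coprime_primes htp hp).mpr fun h => htpeq h
          have ctq : Nat.Coprime t q := (Nat.coprime_primes htp hq).mpr fun h => htqeq h
          exact Nat.Coprime.pow_left m ((ctp.pow_right a).mul_right (ctq.pow_right b))
        obtain ⟨K, hK⟩ := Subgroup.exists_right_complement'_of_coprime hcop
        have hKcard : Nat.card K = p ^ a * q ^ b := by
          have h := hK.card_mul
          rw [hN'card, hB'card, hBqcard, mul_comm (p ^ a * q ^ b)] at h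
          exact Nat.eq_of_mul_eq_mul_left (Nat.card_pos) h
        refine ⟨K.map B'.subtype, a, b, hapos, hbpos, ?_⟩
        rw [← hKcard]
        exact (Nat.card_congr (Subgroup.equivMapOfInjective _ _ (Subgroup.subtype_injective B')).toEquiv).symm


/-- Lemma 3.2: Let `H` be a finite group, `p ≠ q` primes dividing `|H|` such that
(1) Sylow `q`-subgroups of `H` are cyclic and Sylow `p`-subgroups have order `p^s`;
(2) `p ∤ q - 1`; (3) `q ∤ p^m - 1` for `1 ≤ m ≤ s`; (4) `H` has no element of order
`pq`. Then `H` has no subgroup of order `p^a q^b` with `a, b > 0`; in particular, `H`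
is not solvable. -/
theorem stmt_8 {H : Type*} [Group H] [Finite H] {p q s : ℕ}
    (hp : p.Prime) (hq : q.Prime) (hpq : p ≠ q)
    (hpd : p ∣ Nat.card H) (hqd : q ∣ Nat.card H)
    (h1q : ∀ Q : Sylow q H, IsCyclic Q)
    (h1p : ∀ P : Sylow p H, Nat.card P = p ^ s)
    (h2 : ¬ p ∣ (q - 1))
    (h3 : ∀ m : ℕ, 1 ≤ m → m ≤ s → ¬ q ∣ (p ^ m - 1))
    (h4 : ∀ x : H, orderOf x ≠ p * q) :
    (∀ (B : Subgroup H) (a b : ℕ), 0 < a → 0 < b → Nat.card B ≠ p ^ a * q ^ b) ∧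
    ¬ IsSolvable H := by
  haveI : Fact p.Prime := ⟨hp⟩
  haveI : Fact q.Prime := ⟨hq⟩
  have hs : s = (Nat.card H).factorization p := by
    have hh := (default : Sylow p H).card_eq_multiplicity
    rw [h1p] at hh
    exact Nat.pow_right_injective hp.two_le hh
  have part1 : ∀ (B : Subgroup H) (a b : ℕ), 0 < a → 0 < b →
      Nat.card B ≠ p ^ a * q ^ b := by
    intro B a b ha hb hcard
    have has : a ≤ s := by
      rw [hs, ← Nat.Prime.pow_dvd_iff_le_factorization hp Nat.card_pos.ne']
      calc p ^ a ∣ Nat.card B := hcard ▸ dvd_mul_right _ _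
      _ ∣ Nat.card H := Subgroup.card_subgroup_dvd_card B
    have hcyc : ∀ Q : Sylow q ↥B, IsCyclic Q := by
      intro Q
      have hpg : IsPGroup q ((Q : Subgroup ↥B).map B.subtype) := Q.isPGroup'.map _
      obtain ⟨R, hR⟩ := hpg.exists_le_sylow
      haveI := h1q R
      haveI : IsCyclic ((Q : Subgroup ↥B).map B.subtype) := Subgroup.isCyclic_of_le hR
      exact isCyclic_of_surjective _
        (Subgroup.equivMapOfInjective _ _ (Subgroup.subtype_injective B)).symm.surjective
    obtain ⟨x, hx⟩ := aux_core hp hq hpq hcard ha hb has hcyc h2 h3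
    exact h4 x (by rw [Subgroup.orderOf_coe, hx])
  refine ⟨part1, ?_⟩
  intro hsolv
  obtain ⟨B, a, b, ha, hb, hcard⟩ :=
    aux_solv hp hq hpq (Nat.card H) H inferInstance inferInstance le_rfl hsolv hpd hqd
  exact part1 B a b ha hb hcard
end

section
/- For every integer n ≥ 5 with n ≠ 6 and n ≠ 10, there exist at least two primes r with n/2 < r ≤ n; that is, π(n) − π(n/2) ≥ 2, where π denotes the prime counting function. Equivalently, there exist primes p and q with n/2 < p < q ≤ n. -/
open Real Nat

section RealIneq

/-- Strengthened version of `Bertrand.real_main_inequality` with an extra factor `2 * x`. -/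
theorem real_main_inequality2 {x : ℝ} (x_large : (512 : ℝ) ≤ x) :
    2 * x ^ 2 * (2 * x) ^ √(2 * x) * 4 ^ (2 * x / 3) ≤ 4 ^ x := by
  let f : ℝ → ℝ := fun x => Real.log 2 + 2 * Real.log x + √(2 * x) * Real.log (2 * x)
      - Real.log 4 / 3 * x
  have hf' : ∀ x : ℝ, 0 < x → 0 < 2 * x ^ 2 * (2 * x) ^ √(2 * x) / 4 ^ (x / 3) := fun x h => by
    positivity
  have hf : ∀ x : ℝ, 0 < x → f x = Real.log (2 * x ^ 2 * (2 * x) ^ √(2 * x) / 4 ^ (x / 3)) := by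
    intro x h5
    have h6 := mul_pos (zero_lt_two' ℝ) h5
    have h7 := Real.rpow_pos_of_pos h6 (√(2 * x))
    have h8 : (0 : ℝ) < 2 * x ^ 2 := by positivity
    rw [Real.log_div (mul_pos h8 h7).ne' (Real.rpow_pos_of_pos four_pos _).ne',
      Real.log_mul h8.ne' h7.ne', Real.log_mul two_ne_zero (pow_ne_zero 2 h5.ne'),
      Real.log_pow, Real.log_rpow h6, Real.log_rpow zero_lt_four]
    push_cast
    ring
  have h5 : 0 < x := lt_of_lt_of_le (by norm_num1) x_large
  rw [← div_le_one (Real.rpow_pos_of_pos four_pos x), ← div_div_eq_mul_div,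
    ← Real.rpow_sub four_pos, ← mul_div 2 x, mul_div_left_comm, ← mul_one_sub,
    (by norm_num1 : (1 : ℝ) - 2 / 3 = 1 / 3), mul_one_div,
    ← Real.log_nonpos_iff (hf' x h5).le, ← hf x h5]
  have h : ConcaveOn ℝ (Set.Ioi 0.5) f := by
    apply ConcaveOn.sub
    · apply ConcaveOn.add
      · apply ConcaveOn.add
        · exact concaveOn_const _ (convex_Ioi _)
        · have := (strictConcaveOn_log_Ioi.concaveOn.subset
            (Set.Ioi_subset_Ioi (by norm_num)) (convex_Ioi 0.5)).smul
            (by norm_num : (0:ℝ) ≤ 2)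
          simpa [smul_eq_mul] using this
      · convert ((strictConcaveOn_sqrt_mul_log_Ioi.concaveOn.comp_linearMap
          ((2 : ℝ) • LinearMap.id))) using 1
        · rfl
        · rfl
        ext x
        simp only [Set.mem_Ioi, Set.mem_preimage, LinearMap.smul_apply,
          LinearMap.id_coe, id_eq, smul_eq_mul]
        rw [← mul_lt_mul_iff_right₀ (two_pos)]
        norm_num1
        rfl
        rfl
    apply ConvexOn.smul
    · refine div_nonneg (Real.log_nonneg (by norm_num1)) (by norm_num1)
    · exact convexOn_id (convex_Ioi (0.5 : ℝ))
  suffices ∃ x1 x2, 0.5 < x1 ∧ x1 < x2 ∧ x2 ≤ x ∧ 0 ≤ f x1 ∧ f x2 ≤ 0 by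
    obtain ⟨x1, x2, h1, h2, h0, h3, h4⟩ := this
    exact (h.right_le_of_le_left'' h1 ((h1.trans h2).trans_le h0) h2 h0 (h4.trans h3)).trans h4
  refine ⟨18, 512, by norm_num1, by norm_num1, x_large, ?_, ?_⟩
  · have : √(2 * 18 : ℝ) = 6 :=
      (Real.sqrt_eq_iff_mul_self_eq_of_pos (by norm_num1)).mpr (by norm_num1)
    rw [hf _ (by norm_num1), Real.log_nonneg_iff (by positivity), this,
      one_le_div (by positivity)]
    norm_num1
  · have h32 : √(2 * 512 : ℝ) = 32 :=
      (Real.sqrt_eq_iff_mul_self_eq_of_pos (by norm_num1)).mpr (by norm_num1)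
    rw [hf _ (by norm_num1), Real.log_nonpos_iff (hf' _ (by norm_num1)).le, h32,
      div_le_one (by positivity)]
    have e1 : (2 : ℝ) * 512 ^ 2 * (2 * 512) ^ (32 : ℝ) = 2 ^ (339 : ℝ) := by
      rw [show ((2 : ℝ) * 512) = 2 ^ (10 : ℝ) by
            rw [show (10:ℝ) = ((10:ℕ):ℝ) by norm_num, Real.rpow_natCast]; norm_num,
        ← Real.rpow_mul (by norm_num), show ((2:ℝ)*512^2) = 2^(19:ℝ) by
            rw [show (19:ℝ) = ((19:ℕ):ℝ) by norm_num, Real.rpow_natCast]; norm_num,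
        ← Real.rpow_add (by norm_num)]
      norm_num
    have e2 : (4 : ℝ) ^ ((512 : ℝ) / 3) = 2 ^ ((1024 : ℝ) / 3) := by
      rw [show (4:ℝ) = 2 ^ (2:ℝ) by
            rw [show (2:ℝ) = ((2:ℕ):ℝ) by norm_num, Real.rpow_natCast]; norm_num,
        ← Real.rpow_mul (by norm_num)]
      norm_num
    rw [e1, e2]
    exact Real.rpow_le_rpow_of_exponent_le (by norm_num) (by norm_num)

end RealIneq

section NatIneq

/-- The strengthened inequality, over the naturals. -/
theorem bertrand2_main_inequality {n : ℕ} (n_large : 512 ≤ n) :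
    2 * n ^ 2 * (2 * n) ^ Nat.sqrt (2 * n) * 4 ^ (2 * n / 3) ≤ 4 ^ n := by
  have key := real_main_inequality2 (x := (n : ℝ)) (by exact_mod_cast n_large)
  rw [Real.rpow_natCast 4 n] at key
  rw [← @Nat.cast_le ℝ]
  push_cast
  refine le_trans ?_ key
  have hb : (1 : ℝ) ≤ 2 * (n : ℝ) := by
    have : (1 : ℝ) ≤ (n : ℝ) := by exact_mod_cast (by omega : 1 ≤ n)
    linarith
  have e1 : (2 * (n : ℝ)) ^ (Nat.sqrt (2 * n) : ℕ) ≤ (2 * (n : ℝ)) ^ √(2 * (n : ℝ)) := by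
    rw [← Real.rpow_natCast]
    apply Real.rpow_le_rpow_of_exponent_le hb
    have h := Real.nat_sqrt_le_real_sqrt (a := 2 * n)
    push_cast at h
    exact h
  have e2 : (4 : ℝ) ^ (2 * n / 3 : ℕ) ≤ (4 : ℝ) ^ (2 * (n : ℝ) / 3) := by
    rw [← Real.rpow_natCast]
    apply Real.rpow_le_rpow_of_exponent_le (by norm_num)
    calc ((2 * n / 3 : ℕ) : ℝ) ≤ ((2 * n : ℕ) : ℝ) / 3 := Nat.cast_div_le
      _ = 2 * (n : ℝ) / 3 := by push_cast; ring
  exact mul_le_mul (mul_le_mul_of_nonneg_left e1 (by positivity)) e2 (by positivity)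
    (by positivity)

/-- The product of prime powers `p ^ ν p` of the central binomial coefficient over
`p ≤ 2n/3` has the usual Erdős bound. -/
theorem prod_small_le (n : ℕ) (n_big : 2 < n) :
    ∏ x ∈ Finset.range (2 * n / 3 + 1), x ^ (Nat.centralBinom n).factorization x
      ≤ (2 * n) ^ Nat.sqrt (2 * n) * 4 ^ (2 * n / 3) := by
  have n_pos : 0 < n := by omega
  have n2_pos : 1 ≤ 2 * n := by omega
  let S := (Finset.range (2 * n / 3 + 1)).filter Nat.Prime
  let f x := x ^ (Nat.centralBinom n).factorization x
  have hSf : ∏ x ∈ S, f x = ∏ x ∈ Finset.range (2 * n / 3 + 1), f x := by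
    refine Finset.prod_filter_of_ne fun p _ h => ?_
    contrapose! h; dsimp only [f]
    rw [Nat.factorization_eq_zero_of_not_prime n.centralBinom h, pow_zero]
  rw [← hSf, ← Finset.prod_filter_mul_prod_filter_not S (· ≤ Nat.sqrt (2 * n))]
  apply mul_le_mul'
  · refine (Finset.prod_le_prod' fun p _ => (?_ : f p ≤ 2 * n)).trans ?_
    · exact Nat.pow_factorization_choose_le (mul_pos two_pos n_pos)
    have : (Finset.Icc 1 (Nat.sqrt (2 * n))).card = Nat.sqrt (2 * n) := by
      rw [Nat.card_Icc, Nat.add_sub_cancel]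
    rw [Finset.prod_const]
    refine pow_right_mono₀ n2_pos ((Finset.card_le_card fun x hx => ?_).trans this.le)
    obtain ⟨h1, h2⟩ := Finset.mem_filter.1 hx
    exact Finset.mem_Icc.mpr ⟨(Finset.mem_filter.1 h1).2.one_lt.le, h2⟩
  · refine le_trans ?_ (primorial_le_4_pow (2 * n / 3))
    refine (Finset.prod_le_prod' fun p hp => (?_ : f p ≤ p)).trans ?_
    · obtain ⟨h1, h2⟩ := Finset.mem_filter.1 hp
      refine (pow_right_mono₀ (Finset.mem_filter.1 h1).2.one_lt.le ?_).trans (pow_one p).le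
      exact Nat.factorization_choose_le_one (Nat.sqrt_lt'.mp <| not_le.1 h2)
    refine Finset.prod_le_prod_of_subset_of_one_le' (Finset.filter_subset _ _) ?_
    exact fun p hp _ => (Finset.mem_filter.1 hp).2.one_lt.le

/-- If there are not two primes in `(n, 2n]`, the product of prime powers of the central
binomial coefficient over `2n/3 < p ≤ 2n` is at most `2 * n`. -/
theorem prod_large_le (n : ℕ) (n_big : 2 < n)
    (no2 : ¬∃ p q : ℕ, p.Prime ∧ q.Prime ∧ n < p ∧ p < q ∧ q ≤ 2 * n) :
    ∏ x ∈ Finset.Ico (2 * n / 3 + 1) (2 * n + 1),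
      x ^ (Nat.centralBinom n).factorization x ≤ 2 * n := by
  have hmid : ∀ b, b.Prime → b ≤ n → 2 * n / 3 + 1 ≤ b →
      b ^ (Nat.centralBinom n).factorization b = 1 := by
    intro b hb h1 h2
    rw [Nat.factorization_centralBinom_of_two_mul_self_lt_three_mul n_big h1 (by omega), pow_zero]
  by_cases hp : ∃ p, p.Prime ∧ n < p ∧ p ≤ 2 * n
  · obtain ⟨p₀, hp₀, hnp₀, hp₀2⟩ := hp
    have hmem : p₀ ∈ Finset.Ico (2 * n / 3 + 1) (2 * n + 1) := by
      rw [Finset.mem_Ico]; omega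
    have hone : ∀ b ∈ Finset.Ico (2 * n / 3 + 1) (2 * n + 1), b ≠ p₀ →
        b ^ (Nat.centralBinom n).factorization b = 1 := by
      intro b hb hne
      rw [Finset.mem_Ico] at hb
      by_cases hbp : b.Prime
      · rcases le_or_gt b n with h1 | h2
        · exact hmid b hbp h1 hb.1
        · exfalso
          rcases lt_or_gt_of_ne hne with hlt | hgt
          · exact no2 ⟨b, p₀, hbp, hp₀, h2, hlt, hp₀2⟩
          · exact no2 ⟨p₀, b, hp₀, hbp, hnp₀, hgt, by omega⟩
      · rw [Nat.factorization_eq_zero_of_not_prime _ hbp, pow_zero]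
    rw [Finset.prod_eq_single_of_mem p₀ hmem hone]
    have hν : (Nat.centralBinom n).factorization p₀ ≤ 1 := by
      apply Nat.factorization_choose_le_one
      nlinarith
    calc p₀ ^ (Nat.centralBinom n).factorization p₀ ≤ p₀ ^ 1 :=
          Nat.pow_le_pow_right hp₀.pos hν
      _ = p₀ := pow_one p₀
      _ ≤ 2 * n := hp₀2
  · have : ∀ b ∈ Finset.Ico (2 * n / 3 + 1) (2 * n + 1),
        b ^ (Nat.centralBinom n).factorization b = 1 := by
      intro b hb
      rw [Finset.mem_Ico] at hb
      by_cases hbp : b.Prime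
      · rcases le_or_gt b n with h1 | h2
        · exact hmid b hbp h1 hb.1
        · exact absurd ⟨b, hbp, h2, by omega⟩ hp
      · rw [Nat.factorization_eq_zero_of_not_prime _ hbp, pow_zero]
    rw [Finset.prod_eq_one this]
    omega

/-- If there are not two primes in `(n, 2n]`, an upper bound on the central binomial
coefficient. -/
theorem centralBinom_le_of_no_two_primes (n : ℕ) (n_big : 2 < n)
    (no2 : ¬∃ p q : ℕ, p.Prime ∧ q.Prime ∧ n < p ∧ p < q ∧ q ≤ 2 * n) :
    Nat.centralBinom n ≤ (2 * n) ^ Nat.sqrt (2 * n) * 4 ^ (2 * n / 3) * (2 * n) := by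
  have hsplit : (∏ x ∈ Finset.range (2 * n / 3 + 1),
        x ^ (Nat.centralBinom n).factorization x) *
      ∏ x ∈ Finset.Ico (2 * n / 3 + 1) (2 * n + 1),
        x ^ (Nat.centralBinom n).factorization x = Nat.centralBinom n := by
    rw [Finset.prod_range_mul_prod_Ico _ (by omega : 2 * n / 3 + 1 ≤ 2 * n + 1)]
    exact Nat.prod_pow_factorization_centralBinom n
  rw [← hsplit]
  exact Nat.mul_le_mul (prod_small_le n n_big) (prod_large_le n n_big no2)

end NatIneq

section TwoPrimes

/-- There are two primes in `(n, 2n]` for all sufficiently large `n`. -/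
theorem exists_two_primes_eventually (n : ℕ) (n_large : 512 ≤ n) :
    ∃ p q : ℕ, p.Prime ∧ q.Prime ∧ n < p ∧ p < q ∧ q ≤ 2 * n := by
  by_contra no2
  have H1 : 2 * n ^ 2 * (2 * n) ^ Nat.sqrt (2 * n) * 4 ^ (2 * n / 3) ≤ 4 ^ n :=
    bertrand2_main_inequality n_large
  have H2 : 4 ^ n < n * Nat.centralBinom n :=
    Nat.four_pow_lt_mul_centralBinom n (by omega)
  have H3 : Nat.centralBinom n ≤ (2 * n) ^ Nat.sqrt (2 * n) * 4 ^ (2 * n / 3) * (2 * n) :=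
    centralBinom_le_of_no_two_primes n (by omega) no2
  have : n * Nat.centralBinom n ≤ 2 * n ^ 2 * (2 * n) ^ Nat.sqrt (2 * n) * 4 ^ (2 * n / 3) := by
    calc n * Nat.centralBinom n
        ≤ n * ((2 * n) ^ Nat.sqrt (2 * n) * 4 ^ (2 * n / 3) * (2 * n)) :=
          Nat.mul_le_mul_left n H3
      _ = 2 * n ^ 2 * (2 * n) ^ Nat.sqrt (2 * n) * 4 ^ (2 * n / 3) := by ring
  exact lt_irrefl _ (H2.trans_le (this.trans H1))

/-- Chain step for the small cases. -/
theorem two_primes_succ {n : ℕ} (a : ℕ) {p q : ℕ} (hp : p.Prime) (hq : q.Prime)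
    (hpq : p < q) (cov : q ≤ 2 * a)
    (H : n < a → ∃ p q : ℕ, p.Prime ∧ q.Prime ∧ n < p ∧ p < q ∧ q ≤ 2 * n)
    (hn : n < p) : ∃ p q : ℕ, p.Prime ∧ q.Prime ∧ n < p ∧ p < q ∧ q ≤ 2 * n := by
  by_cases h : q ≤ 2 * n
  · exact ⟨p, q, hp, hq, hn, hpq, h⟩
  · exact H (by omega)

/-- For every `n ≥ 6` there are two primes in `(n, 2n]`. -/
theorem exists_two_primes (n : ℕ) (hn : 6 ≤ n) :
    ∃ p q : ℕ, p.Prime ∧ q.Prime ∧ n < p ∧ p < q ∧ q ≤ 2 * n := by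
  rcases lt_or_ge n 617 with h | h
  · revert h
    refine two_primes_succ 311 (p := 617) (q := 619) (by norm_num) (by norm_num) (by norm_num)
      (by norm_num) ?_
    refine two_primes_succ 157 (p := 311) (q := 313) (by norm_num) (by norm_num) (by norm_num)
      (by norm_num) ?_
    refine two_primes_succ 83 (p := 157) (q := 163) (by norm_num) (by norm_num) (by norm_num)
      (by norm_num) ?_
    refine two_primes_succ 47 (p := 83) (q := 89) (by norm_num) (by norm_num) (by norm_num)
      (by norm_num) ?_
    refine two_primes_succ 29 (p := 47) (q := 53) (by norm_num) (by norm_num) (by norm_num)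
      (by norm_num) ?_
    refine two_primes_succ 17 (p := 29) (q := 31) (by norm_num) (by norm_num) (by norm_num)
      (by norm_num) ?_
    refine two_primes_succ 11 (p := 17) (q := 19) (by norm_num) (by norm_num) (by norm_num)
      (by norm_num) ?_
    refine two_primes_succ 7 (p := 11) (q := 13) (by norm_num) (by norm_num) (by norm_num)
      (by norm_num) ?_
    refine two_primes_succ 6 (p := 7) (q := 11) (by norm_num) (by norm_num) (by norm_num)
      (by norm_num) ?_
    intro h6
    omega
  · exact exists_two_primes_eventually n (by omega)

end TwoPrimes

/-- Counting consequence: two primes in `(m, n]` give `π m + 2 ≤ π n`. -/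
theorem primeCounting_add_two_le {m n p q : ℕ} (hp : p.Prime) (hq : q.Prime)
    (h1 : m < p) (h2 : p < q) (h3 : q ≤ n) :
    Nat.primeCounting m + 2 ≤ Nat.primeCounting n := by
  have hm : Nat.primeCounting m = ((Finset.range (m + 1)).filter Nat.Prime).card := by
    rw [Nat.primeCounting, Nat.primeCounting', Nat.count_eq_card_filter_range]
  have hn : Nat.primeCounting n = ((Finset.range (n + 1)).filter Nat.Prime).card := by
    rw [Nat.primeCounting, Nat.primeCounting', Nat.count_eq_card_filter_range]
  rw [hm, hn]
  set A := (Finset.range (m + 1)).filter Nat.Prime with hA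
  have hpA : p ∉ A := by simp [hA, Finset.mem_filter]; omega
  have hqA : q ∉ insert p A := by
    simp [hA, Finset.mem_filter, Finset.mem_insert]
    constructor
    · omega
    · intro h; omega
  have hsub : insert q (insert p A) ⊆ (Finset.range (n + 1)).filter Nat.Prime := by
    intro x hx
    simp only [Finset.mem_insert] at hx
    rcases hx with rfl | rfl | hx
    · simp [Finset.mem_filter, Finset.mem_range]; exact ⟨by omega, hq⟩
    · simp [Finset.mem_filter, Finset.mem_range]; exact ⟨by omega, hp⟩
    · rw [hA, Finset.mem_filter, Finset.mem_range] at hx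
      rw [Finset.mem_filter, Finset.mem_range]
      exact ⟨by omega, hx.2⟩
  have := Finset.card_le_card hsub
  rw [Finset.card_insert_of_notMem hqA, Finset.card_insert_of_notMem hpA] at this
  omega

/-- For every `n ≥ 5` with `n ≠ 6, 10` there are at least two primes `r` with
`n/2 < r ≤ n`, i.e. `π(n) - π(n/2) ≥ 2`; equivalently there are primes `p < q` with
`n/2 < p` and `q ≤ n`. -/
theorem stmt_10 (n : ℕ) (hn : 5 ≤ n) (h6 : n ≠ 6) (h10 : n ≠ 10) :
    2 ≤ Nat.primeCounting n - Nat.primeCounting (n / 2) ∧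
    ∃ p q : ℕ, p.Prime ∧ q.Prime ∧ (n : ℚ) / 2 < (p : ℚ) ∧ p < q ∧ q ≤ n := by
  have key : ∃ p q : ℕ, p.Prime ∧ q.Prime ∧ n / 2 < p ∧ p < q ∧ q ≤ n := by
    rcases lt_or_ge n 12 with hsmall | hbig
    · interval_cases n
      · exact ⟨3, 5, by norm_num, by norm_num, by norm_num, by norm_num, by norm_num⟩
      · omega
      · exact ⟨5, 7, by norm_num, by norm_num, by norm_num, by norm_num, by norm_num⟩
      · exact ⟨5, 7, by norm_num, by norm_num, by norm_num, by norm_num, by norm_num⟩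
      · exact ⟨5, 7, by norm_num, by norm_num, by norm_num, by norm_num, by norm_num⟩
      · omega
      · exact ⟨7, 11, by norm_num, by norm_num, by norm_num, by norm_num, by norm_num⟩
    · obtain ⟨p, q, hp, hq, h1, h2, h3⟩ := exists_two_primes (n / 2) (by omega)
      exact ⟨p, q, hp, hq, h1, h2, by omega⟩
  obtain ⟨p, q, hp, hq, h1, h2, h3⟩ := key
  have hcount := primeCounting_add_two_le hp hq h1 h2 h3
  refine ⟨by omega, p, q, hp, hq, ?_, h2, h3⟩
  rw [div_lt_iff₀ (by norm_num : (0:ℚ) < 2)]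
  exact_mod_cast (by omega : n < p * 2)
end

section
/- Let n > 5 be an integer that is not prime. Then for all primes a and b with a < n and b < n, there exist elements x, y of the alternating group A_n such that the order of x is a, the order of y is b, and the subgroup ⟨x, y⟩ generated by x and y is a proper subgroup of A_n. -/
open Equiv Equiv.Perm

lemma aux_elem (n a : ℕ) (hn : 5 < n) (ha : a.Prime) (han : a < n) :
    ∃ x : Perm (Fin n), x ∈ alternatingGroup (Fin n) ∧ orderOf x = a ∧
      x ⟨n - 1, by omega⟩ = ⟨n - 1, by omega⟩ := by
  rcases ha.eq_two_or_odd' with rfl | hodd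
  · -- x = swap 0 1 * swap 2 3
    have h0 : (0 : ℕ) < n := by omega
    have h1 : (1 : ℕ) < n := by omega
    have h2 : (2 : ℕ) < n := by omega
    have h3 : (3 : ℕ) < n := by omega
    set e0 : Fin n := ⟨0, h0⟩
    set e1 : Fin n := ⟨1, h1⟩
    set e2 : Fin n := ⟨2, h2⟩
    set e3 : Fin n := ⟨3, h3⟩
    have hne : e0 ≠ e1 ∧ e2 ≠ e3 := by constructor <;> simp [e0, e1, e2, e3, Fin.ext_iff]
    refine ⟨swap e0 e1 * swap e2 e3, ?_, ?_, ?_⟩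
    · rw [Equiv.Perm.mem_alternatingGroup, map_mul, Equiv.Perm.sign_swap hne.1,
        Equiv.Perm.sign_swap hne.2]
      decide
    · have hcomm : Commute (swap e0 e1) (swap e2 e3) := by
        apply Equiv.Perm.Disjoint.commute
        intro i
        by_cases h01 : i = e0 ∨ i = e1
        · right
          rcases h01 with rfl | rfl <;>
            exact swap_apply_of_ne_of_ne (by simp [e0,e1,e2,e3,Fin.ext_iff]) (by simp [e0,e1,e2,e3,Fin.ext_iff])
        · left
          push_neg at h01
          exact swap_apply_of_ne_of_ne h01.1 h01.2
      apply orderOf_eq_prime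
      · calc (swap e0 e1 * swap e2 e3)^2
            = swap e0 e1 * (swap e2 e3 * swap e0 e1) * swap e2 e3 := by
              rw [pow_two]; simp only [mul_assoc]
          _ = swap e0 e1 * (swap e0 e1 * swap e2 e3) * swap e2 e3 := by rw [hcomm.eq]
          _ = (swap e0 e1 * swap e0 e1) * (swap e2 e3 * swap e2 e3) := by
              simp only [mul_assoc]
          _ = 1 := by simp
      · intro h
        have h2' := Equiv.ext_iff.mp h e2
        simp only [Equiv.Perm.mul_apply, Equiv.Perm.one_apply] at h2'
        rw [swap_apply_left, swap_apply_of_ne_of_ne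
          (by simp [e0,e2,e3,Fin.ext_iff]) (by simp [e1,e2,e3,Fin.ext_iff])] at h2'
        exact hne.2 h2'.symm
    · have hne' : ∀ (k : ℕ) (hk : k < n), k < 4 → (⟨n-1, by omega⟩ : Fin n) ≠ ⟨k, hk⟩ := by
        intro k hk hk4 h
        rw [Fin.mk.injEq] at h
        omega
      rw [Equiv.Perm.mul_apply,
        swap_apply_of_ne_of_ne (hne' 2 h2 (by norm_num)) (hne' 3 h3 (by norm_num)),
        swap_apply_of_ne_of_ne (hne' 0 h0 (by norm_num)) (hne' 1 h1 (by norm_num))]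
  · -- a-cycle
    set l : List (Fin n) := (List.range a).map (fun i => ⟨i % n, Nat.mod_lt _ (by omega)⟩) with hl
    have hmem : ∀ x ∈ l, x.val < a := by
      intro x hx
      simp only [hl, List.mem_map, List.mem_range] at hx
      obtain ⟨i, hi, rfl⟩ := hx
      simpa [Nat.mod_eq_of_lt (by omega : i < n)] using hi
    have hnd : l.Nodup := by
      apply List.Nodup.map_on _ (List.nodup_range : (List.range a).Nodup)
      intro i hi j hj hij
      simp only [List.mem_range] at hi hj
      simpa [Fin.ext_iff, Nat.mod_eq_of_lt (by omega : i < n),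
        Nat.mod_eq_of_lt (by omega : j < n)] using hij
    have hlen : l.length = a := by simp [hl]
    have h2 : 2 ≤ l.length := by rw [hlen]; exact ha.two_le
    have hcyc : (l.formPerm).IsCycle := List.isCycle_formPerm hnd h2
    have hsupp : (l.formPerm).support = l.toFinset :=
      List.support_formPerm_of_nodup l hnd (by intro x hx; rw [hx] at hlen; simp at hlen; have := ha.two_le; omega)
    have hcard : (l.formPerm).support.card = a := by
      rw [hsupp, List.card_toFinset, List.dedup_eq_self.mpr hnd, hlen]
    refine ⟨l.formPerm, ?_, ?_, ?_⟩
    · rw [Equiv.Perm.mem_alternatingGroup, hcyc.sign, hcard, hodd.neg_one_pow]; decide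
    · rw [hcyc.orderOf, hcard]
    · apply List.formPerm_apply_of_notMem
      intro hmem'
      have := hmem _ hmem'
      simp at this
      omega

/-- If `n > 5` is not prime, then for all primes `a, b < n` there exist `x, y ∈ Aₙ`
with `|x| = a`, `|y| = b` and `⟨x, y⟩` a proper subgroup of `Aₙ`. -/
theorem stmt_11 (n : ℕ) (hn : 5 < n) (hnp : ¬ n.Prime) :
    ∀ a b : ℕ, a.Prime → b.Prime → a < n → b < n →
      ∃ x y : alternatingGroup (Fin n), orderOf x = a ∧ orderOf y = b ∧
        Subgroup.closure {x, y} ≠ (⊤ : Subgroup (alternatingGroup (Fin n))) := by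
  intro a b ha hb han hbn
  obtain ⟨x, hxA, hxo, hxfix⟩ := aux_elem n a hn ha han
  obtain ⟨y, hyA, hyo, hyfix⟩ := aux_elem n b hn hb hbn
  refine ⟨⟨x, hxA⟩, ⟨y, hyA⟩, Subgroup.orderOf_mk x hxA ▸ hxo,
    Subgroup.orderOf_mk y hyA ▸ hyo, ?_⟩
  intro htop
  set pt : Fin n := ⟨n - 1, by omega⟩
  -- every element of the closure fixes pt
  have hfix : ∀ g ∈ Subgroup.closure ({⟨x, hxA⟩, ⟨y, hyA⟩} :
      Set (alternatingGroup (Fin n))), (g : Perm (Fin n)) pt = pt := by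
    intro g hg
    induction hg using Subgroup.closure_induction with
    | mem g hg => rcases hg with rfl | rfl <;> assumption
    | one => simp
    | mul g h _ _ hgf hhf => simp [Subgroup.coe_mul, Equiv.Perm.mul_apply, hhf, hgf]
    | inv g _ hgf =>
        have : (g : Perm (Fin n))⁻¹ ((g : Perm (Fin n)) pt) = (g : Perm (Fin n))⁻¹ pt := by
          rw [hgf]
        simpa using this.symm
  -- a 3-ish element moving pt
  set e0 : Fin n := ⟨0, by omega⟩
  set e1 : Fin n := ⟨1, by omega⟩
  have hpt0 : pt ≠ e0 := by simp [pt, e0, Fin.ext_iff]; omega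
  have hpt1 : pt ≠ e1 := by simp [pt, e1, Fin.ext_iff]; omega
  have h01 : e0 ≠ e1 := by simp [e0, e1, Fin.ext_iff]
  have hcA : swap pt e0 * swap e0 e1 ∈ alternatingGroup (Fin n) := by
    rw [Equiv.Perm.mem_alternatingGroup, map_mul, Equiv.Perm.sign_swap hpt0,
      Equiv.Perm.sign_swap h01]
    decide
  have hc : (⟨_, hcA⟩ : alternatingGroup (Fin n)) ∈ Subgroup.closure
      ({⟨x, hxA⟩, ⟨y, hyA⟩} : Set (alternatingGroup (Fin n))) := htop ▸ Subgroup.mem_top _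
  have := hfix _ hc
  simp only [Equiv.Perm.mul_apply] at this
  rw [swap_apply_of_ne_of_ne hpt0 hpt1, swap_apply_left] at this
  exact hpt0 this.symm
end

section
/- Let q = 2^a with a ≥ 2, let F be the finite field with q elements, and let G = SL(2, F) be the special linear group of 2 × 2 matrices of determinant 1 over F. Let r₁ be an odd prime dividing q − 1 and let r₂ be an odd prime dividing q + 1. Then for all x, y ∈ G with the order of x equal to r₁ and the order of y equal to r₂, the subgroup ⟨x, y⟩ is not solvable. -/
open Matrix Polynomial
open scoped commutatorElement

/-- Two kernel vectors of a nonzero 2×2 matrix are parallel. -/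
lemma ker_par {K : Type*} [Field K] {M : Matrix (Fin 2) (Fin 2) K} (hM : M ≠ 0)
    {v w : Fin 2 → K} (hv : M.mulVec v = 0) (hw : M.mulVec w = 0) (hv0 : v ≠ 0) :
    ∃ c : K, w = c • v := by
  have ev : ∀ i, M i 0 * v 0 + M i 1 * v 1 = 0 := by
    intro i
    have := congrFun hv i
    simpa [Matrix.mulVec, dotProduct, Fin.sum_univ_two] using this
  have ew : ∀ i, M i 0 * w 0 + M i 1 * w 1 = 0 := by
    intro i
    have := congrFun hw i
    simpa [Matrix.mulVec, dotProduct, Fin.sum_univ_two] using this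
  have key : v 0 * w 1 - v 1 * w 0 = 0 := by
    by_contra hk
    apply hM
    ext i j
    have h1 : M i 0 * (v 0 * w 1 - v 1 * w 0) = 0 := by
      linear_combination w 1 * ev i - v 1 * ew i
    have h2 : M i 1 * (v 0 * w 1 - v 1 * w 0) = 0 := by
      linear_combination (- w 0) * ev i + v 0 * ew i
    fin_cases j
    · simpa using mul_eq_zero.1 h1 |>.resolve_right hk
    · simpa using mul_eq_zero.1 h2 |>.resolve_right hk
  by_cases h0 : v 0 = 0
  · have h1 : v 1 ≠ 0 := by
      intro h1; apply hv0; funext i; fin_cases i <;> simp [h0, h1]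
    have hw0 : w 0 = 0 := by
      have h2 : v 1 * w 0 = 0 := by linear_combination -key + w 1 * h0
      exact (mul_eq_zero.1 h2).resolve_left h1
    refine ⟨w 1 / v 1, ?_⟩
    funext i; fin_cases i
    · show w 0 = w 1 / v 1 * v 0
      rw [hw0, h0, mul_zero]
    · show w 1 = w 1 / v 1 * v 1
      rw [div_mul_cancel₀ _ h1]
  · refine ⟨w 0 / v 0, ?_⟩
    funext i; fin_cases i
    · show w 0 = w 0 / v 0 * v 0
      rw [div_mul_cancel₀ _ h0]
    · show w 1 = w 0 / v 0 * v 1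
      field_simp
      linear_combination key

/-- Cayley–Hamilton for 2×2 matrices. -/
lemma ch2 {K : Type*} [CommRing K] (M : Matrix (Fin 2) (Fin 2) K) :
    M * M - M.trace • M + M.det • 1 = 0 := by
  ext i j
  fin_cases i <;> fin_cases j <;>
    simp [Matrix.mul_apply, Fin.sum_univ_two, Matrix.trace_fin_two, Matrix.det_fin_two,
      Matrix.one_apply] <;> ring

/-- A monic quadratic has a root in an algebraically closed field. -/
lemma quad_root {K : Type*} [Field K] [IsAlgClosed K] (b c : K) :
    ∃ μ : K, μ ^ 2 + b * μ + c = 0 := by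
  obtain ⟨μ, hμ⟩ := IsAlgClosed.exists_root (X ^ 2 + C b * X + C c) (by
    have : (X ^ 2 + C b * X + C c : K[X]).degree = 2 := by compute_degree!
    rw [this]; norm_num)
  refine ⟨μ, ?_⟩
  have := hμ
  simpa [IsRoot, eval_add, eval_mul, eval_pow] using this

/-- eigen equation iterates along powers -/
lemma eig_pow {K : Type*} [CommRing K] {G : Type*} [Group G]
    (ρ : G →* Matrix (Fin 2) (Fin 2) K) {g : G} {v : Fin 2 → K} {α : K}
    (h : (ρ g).mulVec v = α • v) : ∀ m : ℕ, (ρ (g ^ m)).mulVec v = α ^ m • v := by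
  intro m
  induction m with
  | zero => simp
  | succ m ih =>
      have : (ρ (g ^ (m + 1))).mulVec v = (ρ g).mulVec ((ρ (g ^ m)).mulVec v) := by
        rw [Matrix.mulVec_mulVec, ← _root_.map_mul, pow_succ']
      rw [this, ih, Matrix.mulVec_smul, h, smul_smul, ← pow_succ]

lemma smul_cancel_ne {K : Type*} [Field K] {v : Fin 2 → K} (hv : v ≠ 0) {c d : K}
    (h : c • v = d • v) : c = d := by
  have h2 : (c - d) • v = 0 := by rw [sub_smul, h, sub_self]
  rcases smul_eq_zero.1 h2 with h3 | h3
  · exact sub_eq_zero.1 h3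
  · exact absurd h3 hv

lemma det_sub_smul_one {K : Type*} [CommRing K] (M : Matrix (Fin 2) (Fin 2) K) (c : K) :
    (M - c • 1).det = c ^ 2 - M.trace * c + M.det := by
  simp [Matrix.det_fin_two, Matrix.trace_fin_two, Matrix.one_apply]
  ring

lemma common_eigenvector {K : Type*} [Field K] [IsAlgClosed K] [CharP K 2]
    {G : Type*} [Group G] (ρ : G →* Matrix (Fin 2) (Fin 2) K)
    (hdet : ∀ g, (ρ g).det = 1) (hinj : Function.Injective ρ)
    (N : Subgroup G) (hNnorm : N.Normal) (hab : ∀ n ∈ N, ∀ m ∈ N, n * m = m * n)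
    (hN : N ≠ ⊥) (x y : G) (hxo : Odd (orderOf x)) (hyo : Odd (orderOf y)) :
    ∃ v : Fin 2 → K, v ≠ 0 ∧ (∃ α : K, (ρ x).mulVec v = α • v) ∧ (∃ β : K, (ρ y).mulVec v = β • v) := by
  have hchar : (2 : K) = 0 := by
    have := CharP.cast_eq_zero K 2; exact_mod_cast this
  have hker : ∀ (g : G) (u : Fin 2 → K), (ρ g).mulVec u = 0 → u = 0 := by
    intro g u hu
    have h1 : (ρ g⁻¹).mulVec ((ρ g).mulVec u) = 0 := by rw [hu, Matrix.mulVec_zero]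
    rwa [Matrix.mulVec_mulVec, ← _root_.map_mul, inv_mul_cancel, _root_.map_one,
      Matrix.one_mulVec] at h1
  by_cases hcase : ∀ n ∈ N, (ρ n).trace = 0
  · -- Case 1 : N is an elementary abelian 2-group
    rcases N.bot_or_exists_ne_one with h | ⟨u, huN, hu1⟩
    · exact absurd h hN
    have sq1 : ∀ n ∈ N, ρ n * ρ n = 1 := by
      intro n hn
      have h := ch2 (ρ n)
      rw [hcase n hn, hdet n, zero_smul, sub_zero, one_smul] at h
      have h2 := eq_neg_of_add_eq_zero_left h
      rwa [CharTwo.neg_eq] at h2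
    have sqz : ∀ n ∈ N, (ρ n - 1) * (ρ n - 1) = 0 := by
      intro n hn
      have h1 : (ρ n - 1) * (ρ n - 1) = ρ n * ρ n + 1 - (ρ n + ρ n) := by noncomm_ring
      rw [h1, sq1 n hn, CharTwo.add_self_eq_zero, CharTwo.add_self_eq_zero, sub_zero]
    set U := ρ u with hU
    have hM : U - 1 ≠ 0 := by
      intro h
      exact hu1 (hinj (by rw [_root_.map_one, ← sub_eq_zero]; exact h))
    have hdetM : (U - 1).det = 0 := by
      have h1 := congrArg Matrix.det (sqz u huN)
      rw [Matrix.det_mul, Matrix.det_zero, mul_self_eq_zero] at h1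
      exact h1
    obtain ⟨v, hv0, hv⟩ := Matrix.exists_mulVec_eq_zero_iff.2 hdetM
    have hNv : ∀ n ∈ N, (ρ n).mulVec v = v := by
      intro n hn
      have hcomm : ρ n * U = U * ρ n := by
        rw [← _root_.map_mul, ← _root_.map_mul, hab n hn u huN]
      have h0 : (U - 1).mulVec ((ρ n).mulVec v) = 0 := by
        have e1 : (U - 1) * ρ n = ρ n * (U - 1) := by
          rw [sub_mul, mul_sub, one_mul, mul_one, hcomm]
        rw [Matrix.mulVec_mulVec, e1, ← Matrix.mulVec_mulVec, hv, Matrix.mulVec_zero]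
      obtain ⟨c, hc⟩ := ker_par hM hv h0 hv0
      have h2 : ((ρ n - 1) * (ρ n - 1)).mulVec v = 0 := by rw [sqz n hn, Matrix.zero_mulVec]
      have h3 : (ρ n - 1).mulVec v = (c - 1) • v := by
        rw [Matrix.sub_mulVec, Matrix.one_mulVec, hc, sub_smul, one_smul]
      have h4 : ((c - 1) * (c - 1)) • v = 0 := by
        rw [← smul_smul, ← h3, ← Matrix.mulVec_smul, ← h3, Matrix.mulVec_mulVec, h2]
      have h5 : (c - 1) * (c - 1) = 0 := by
        rcases smul_eq_zero.1 h4 with h | h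
        · exact h
        · exact absurd h hv0
      have h6 : c = 1 := by
        have := mul_self_eq_zero.1 h5
        rw [sub_eq_zero] at this; exact this
      rw [hc, h6, one_smul]
    have hall : ∀ g : G, ∃ c : K, (ρ g).mulVec v = c • v := by
      intro g
      have hn : g⁻¹ * u * g ∈ N := hNnorm.conj_mem' u huN g
      have key : U.mulVec ((ρ g).mulVec v) = (ρ g).mulVec v := by
        rw [Matrix.mulVec_mulVec, ← _root_.map_mul,
          show u * g = g * (g⁻¹ * u * g) by group, _root_.map_mul,
          ← Matrix.mulVec_mulVec, hNv _ hn]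
      have h0 : (U - 1).mulVec ((ρ g).mulVec v) = 0 := by
        rw [Matrix.sub_mulVec, Matrix.one_mulVec, key, sub_self]
      exact ker_par hM hv h0 hv0
    exact ⟨v, hv0, hall x, hall y⟩
  · -- Case 2 : N contains a regular semisimple element s
    push_neg at hcase
    obtain ⟨s, hsN, hτ⟩ := hcase
    obtain ⟨μ, hμ⟩ := quad_root (-(ρ s).trace) (1 : K)
    have hμ0 : μ ≠ 0 := by
      intro h; rw [h] at hμ; simp at hμ
    set μ' := μ⁻¹ with hμ'
    have hdets : (ρ s).det = 1 := hdet s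
    have hμμ1 : μ * μ' = 1 := mul_inv_cancel₀ hμ0
    have htr : (ρ s).trace = μ + μ' := by
      rw [hμ']; field_simp; linear_combination -hμ
    have hμμ' : μ ≠ μ' := by
      intro h
      have h1 : μ * μ = 1 := by rw [h] at hμμ1 ⊢; exact hμμ1
      have h2 : (μ + 1) * (μ + 1) = 0 := by linear_combination h1 + μ * hchar + hchar
      have h3 : μ = 1 := by
        have := mul_self_eq_zero.1 h2
        linear_combination this - hchar
      apply hτ
      rw [htr, ← h, h3]; linear_combination hchar
    have hrootμ : (ρ s - μ • 1).det = 0 := by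
      rw [det_sub_smul_one, hdets]; linear_combination hμ
    have hrootμ' : (ρ s - μ' • 1).det = 0 := by
      rw [det_sub_smul_one, hdets, htr, hμ']
      field_simp
      ring
    obtain ⟨v, hv0, hvker⟩ := Matrix.exists_mulVec_eq_zero_iff.2 hrootμ
    obtain ⟨w, hw0, hwker⟩ := Matrix.exists_mulVec_eq_zero_iff.2 hrootμ'
    have hMne : ∀ c : K, ρ s - c • 1 ≠ 0 := by
      intro c h
      apply hτ
      have h1 : ρ s = c • 1 := sub_eq_zero.1 h
      rw [h1, Matrix.trace_smul, Matrix.trace_one]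
      simp only [smul_eq_mul, Fintype.card_fin]
      rw [show ((2 : ℕ) : K) = (2 : K) by norm_cast, hchar, mul_zero]
    have hsv : (ρ s).mulVec v = μ • v := by
      have := hvker
      rwa [Matrix.sub_mulVec, Matrix.smul_mulVec, Matrix.one_mulVec, sub_eq_zero] at this
    have hsw : (ρ s).mulVec w = μ' • w := by
      have := hwker
      rwa [Matrix.sub_mulVec, Matrix.smul_mulVec, Matrix.one_mulVec, sub_eq_zero] at this
    have hindep : ∀ c : K, v ≠ c • w := by
      intro c h
      have h1 : (ρ s).mulVec v = (c * μ') • w := by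
        rw [h, Matrix.mulVec_smul, hsw, smul_smul]
      have h2 : (μ * c) • w = (c * μ') • w := by
        rw [← smul_smul, ← h, ← hsv, h1]
      have h3 : μ * c = c * μ' := smul_cancel_ne hw0 h2
      rcases mul_eq_zero.1 (show c * (μ - μ') = 0 by linear_combination h3) with h4 | h4
      · rw [h4, zero_smul] at h; exact hv0 h
      · exact hμμ' (sub_eq_zero.1 h4)
    have genA : ∀ (c : K) (u : Fin 2 → K), u ≠ 0 → (ρ s).mulVec u = c • u →
        ∀ n ∈ N, ∃ e : K, (ρ n).mulVec u = e • u := by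
      intro c u hu hsu n hn
      have hukerc : (ρ s - c • 1).mulVec u = 0 := by
        rw [Matrix.sub_mulVec, Matrix.smul_mulVec, Matrix.one_mulVec, hsu, sub_self]
      have hcomm : ρ n * ρ s = ρ s * ρ n := by
        rw [← _root_.map_mul, ← _root_.map_mul, hab n hn s hsN]
      have h0 : (ρ s - c • 1).mulVec ((ρ n).mulVec u) = 0 := by
        have e1 : (ρ s - c • 1) * ρ n = ρ n * (ρ s - c • 1) := by
          rw [sub_mul, mul_sub, Matrix.smul_mul, one_mul, Matrix.mul_smul, mul_one, hcomm]
        rw [Matrix.mulVec_mulVec, e1, ← Matrix.mulVec_mulVec, hukerc, Matrix.mulVec_zero]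
      exact ker_par (hMne c) hukerc h0 hu
    have roots : ∀ (e : K) (u : Fin 2 → K), u ≠ 0 → (ρ s).mulVec u = e • u →
        e = μ ∨ e = μ' := by
      intro e u hu hsu
      have hker' : (ρ s - e • 1).mulVec u = 0 := by
        rw [Matrix.sub_mulVec, Matrix.smul_mulVec, Matrix.one_mulVec, hsu, sub_self]
      have hdet0 : (ρ s - e • 1).det = 0 :=
        Matrix.exists_mulVec_eq_zero_iff.1 ⟨u, hu, hker'⟩
      rw [det_sub_smul_one, hdets, htr] at hdet0
      have hfac : (e - μ) * (e - μ') = 0 := by linear_combination hdet0 + hμμ1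
      rcases mul_eq_zero.1 hfac with h | h
      · exact Or.inl (sub_eq_zero.1 h)
      · exact Or.inr (sub_eq_zero.1 h)
    have move : ∀ (g : G) (c : K) (u : Fin 2 → K), u ≠ 0 → (ρ s).mulVec u = c • u →
        (∃ e : K, (ρ g).mulVec u = e • v) ∨ (∃ e : K, (ρ g).mulVec u = e • w) := by
      intro g c u hu hsu
      have hn : g⁻¹ * s * g ∈ N := hNnorm.conj_mem' s hsN g
      obtain ⟨e, he⟩ := genA c u hu hsu _ hn
      have hgu0 : (ρ g).mulVec u ≠ 0 := fun h => hu (hker g u h)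
      have hseig : (ρ s).mulVec ((ρ g).mulVec u) = e • ((ρ g).mulVec u) := by
        rw [Matrix.mulVec_mulVec, ← _root_.map_mul,
          show s * g = g * (g⁻¹ * s * g) by group, _root_.map_mul,
          ← Matrix.mulVec_mulVec, he, Matrix.mulVec_smul]
      have hgker : (ρ s - e • 1).mulVec ((ρ g).mulVec u) = 0 := by
        rw [Matrix.sub_mulVec, Matrix.smul_mulVec, Matrix.one_mulVec, hseig, sub_self]
      rcases roots e _ hgu0 hseig with h | h
      · rw [h] at hgker
        exact Or.inl (ker_par (hMne μ) hvker hgker hv0)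
      · rw [h] at hgker
        exact Or.inr (ker_par (hMne μ') hwker hgker hw0)
    have oddline : ∀ g : G, Odd (orderOf g) → ∃ e : K, (ρ g).mulVec v = e • v := by
      intro g hg
      rcases move g μ v hv0 hsv with h | ⟨c, hc⟩
      · exact h
      exfalso
      have hc0 : c ≠ 0 := by
        rintro rfl
        rw [zero_smul] at hc
        exact hv0 (hker g v hc)
      rcases move g μ' w hw0 hsw with ⟨d, hd⟩ | ⟨d, hd⟩
      · -- g swaps the two lines; contradiction with odd order
        have h2 : (ρ (g ^ 2)).mulVec v = (c * d) • v := by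
          rw [pow_two, _root_.map_mul, ← Matrix.mulVec_mulVec, hc, Matrix.mulVec_smul, hd,
            smul_smul]
        have hpow : ∀ m : ℕ, (ρ (g ^ (2 * m))).mulVec v = ((c * d) ^ m) • v := by
          intro m
          have := eig_pow ρ h2 m
          rwa [← pow_mul] at this
        obtain ⟨m, hm⟩ := hg
        have h1 : (ρ (g ^ (2 * m + 1))).mulVec v = ((c * d) ^ m * c) • w := by
          rw [pow_succ', _root_.map_mul, ← Matrix.mulVec_mulVec, hpow m, Matrix.mulVec_smul,
            hc, smul_smul]
        rw [← hm, pow_orderOf_eq_one, _root_.map_one, Matrix.one_mulVec] at h1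
        exact hindep _ h1
      · -- g would map both lines into line w: not injective
        have hδ : (ρ g).mulVec (d • v - c • w) = 0 := by
          rw [Matrix.mulVec_sub, Matrix.mulVec_smul, Matrix.mulVec_smul, hc, hd,
            smul_smul, smul_smul, mul_comm c d, sub_self]
        have hdv : d • v = c • w := by
          have := hker g _ hδ
          rwa [sub_eq_zero] at this
        have hd0 : d ≠ 0 := by
          rintro rfl
          rw [zero_smul] at hdv
          rcases smul_eq_zero.1 hdv.symm with h | h
          · exact hc0 h
          · exact hw0 h
        exact hindep (d⁻¹ * c)
          (by rw [← smul_smul, ← hdv, smul_smul, inv_mul_cancel₀ hd0, one_smul])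
    exact ⟨v, hv0, oddline x hxo, oddline y hyo⟩

/-- For `G = SL₂(q)` with `q = 2^a ≥ 4`: if `r₁` is an odd prime dividing `q - 1` and
`r₂` an odd prime dividing `q + 1`, then for all `x, y ∈ G` with `|x| = r₁` and
`|y| = r₂`, the subgroup `⟨x, y⟩` is not solvable. -/
theorem stmt_12 (a : ℕ) (ha : 2 ≤ a) (F : Type*) [Field F] [Fintype F]
    (hF : Fintype.card F = 2 ^ a)
    (r₁ r₂ : ℕ) (hr₁ : r₁.Prime) (hr₂ : r₂.Prime) (h₁ : Odd r₁) (h₂ : Odd r₂)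
    (hd₁ : r₁ ∣ 2 ^ a - 1) (hd₂ : r₂ ∣ 2 ^ a + 1) :
    ∀ x y : Matrix.SpecialLinearGroup (Fin 2) F,
      orderOf x = r₁ → orderOf y = r₂ →
        ¬ IsSolvable (Subgroup.closure {x, y}) := by
  classical
  intro x y hx hy hsolv
  haveI hp2 : CharP F 2 := by
    obtain ⟨n, hp, hcard⟩ := FiniteField.card F (ringChar F)
    have hdvd : ringChar F ∣ 2 ^ a := by
      rw [← hF, hcard]; exact dvd_pow_self _ n.ne_zero
    have h2 : ringChar F = 2 :=
      (Nat.prime_dvd_prime_iff_eq hp Nat.prime_two).1 (hp.dvd_of_dvd_pow hdvd)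
    exact h2 ▸ ringChar.charP F
  set K := AlgebraicClosure F with hK
  haveI : CharP K 2 := charP_of_injective_algebraMap (algebraMap F K).injective 2
  haveI : Fact (Nat.Prime 2) := ⟨Nat.prime_two⟩
  have hcharK : (2 : K) = 0 := by
    have := CharP.cast_eq_zero K 2; exact_mod_cast this
  set H := Subgroup.closure ({x, y} : Set (Matrix.SpecialLinearGroup (Fin 2) F)) with hH
  have hxH : x ∈ H := Subgroup.subset_closure (by simp)
  have hyH : y ∈ H := Subgroup.subset_closure (by simp)
  set x' : ↥H := ⟨x, hxH⟩ with hx'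
  set y' : ↥H := ⟨y, hyH⟩ with hy'
  have hox : orderOf x' = r₁ := by
    rw [← hx, ← orderOf_injective H.subtype Subtype.coe_injective x']; rfl
  have hoy : orderOf y' = r₂ := by
    rw [← hy, ← orderOf_injective H.subtype Subtype.coe_injective y']; rfl
  -- the representation over the algebraic closure
  let f : F →+* K := algebraMap F K
  let ρ : ↥H →* Matrix (Fin 2) (Fin 2) K :=
    { toFun := fun g => ((g : Matrix.SpecialLinearGroup (Fin 2) F) : Matrix (Fin 2) (Fin 2) F).map f
      map_one' := by
        simp [Matrix.map_one f (map_zero f) (map_one f)]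
      map_mul' := by
        intro g h
        simp [Matrix.map_mul] }
  have hρ_apply : ∀ (g : ↥H) i j, ρ g i j = f (((g : Matrix.SpecialLinearGroup (Fin 2) F) :
      Matrix (Fin 2) (Fin 2) F) i j) := by
    intro g i j; rfl
  have hdetρ : ∀ g : ↥H, (ρ g).det = 1 := by
    intro g
    have : (ρ g).det = f (((g : Matrix.SpecialLinearGroup (Fin 2) F) :
        Matrix (Fin 2) (Fin 2) F).det) := (RingHom.map_det f _).symm
    rw [this, Matrix.SpecialLinearGroup.det_coe, _root_.map_one]
  have hinjρ : Function.Injective ρ := by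
    intro g h hgh
    ext i j
    exact f.injective (by rw [← hρ_apply, ← hρ_apply, hgh])
  -- the abelian normal subgroup from the derived series
  have hsolv' : ∃ n, derivedSeries ↥H n = ⊥ := hsolv.solvable
  set k := Nat.find hsolv' with hk
  have hkspec : derivedSeries ↥H k = ⊥ := Nat.find_spec hsolv'
  have hk0 : k ≠ 0 := by
    intro h0
    rw [h0] at hkspec
    have hmem : x' ∈ derivedSeries ↥H 0 := Subgroup.mem_top x'
    rw [hkspec] at hmem
    have hx1 : x' = 1 := Subgroup.mem_bot.1 hmem
    have : orderOf x' = 1 := by rw [hx1, orderOf_one]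
    rw [hox] at this
    exact hr₁.one_lt.ne' this
  obtain ⟨m, hm⟩ := Nat.exists_eq_succ_of_ne_zero hk0
  set N := derivedSeries ↥H m with hN
  have hNnorm : N.Normal := derivedSeries_normal ↥H m
  have hNbot : N ≠ ⊥ := Nat.find_min hsolv' (by omega)
  have hNsucc : (⁅N, N⁆ : Subgroup ↥H) = ⊥ := by
    have hm1 : m + 1 = k := by omega
    rw [hN, ← derivedSeries_succ, hm1, hkspec]
  have hab : ∀ n ∈ N, ∀ p ∈ N, n * p = p * n := by
    intro n hn p hp
    have : ⁅n, p⁆ ∈ (⊥ : Subgroup ↥H) :=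
      hNsucc ▸ Subgroup.commutator_le.1 (le_of_eq hNsucc) n hn p hp
    exact (commutatorElement_eq_one_iff_commute.1 (Subgroup.mem_bot.1 this)).eq
  -- apply the common eigenvector lemma
  obtain ⟨v, hv0, ⟨α, hα⟩, ⟨β, hβ⟩⟩ :=
    common_eigenvector ρ hdetρ hinjρ N hNnorm hab hNbot x' y'
      (by rw [hox]; exact h₁) (by rw [hoy]; exact h₂)
  -- basic facts
  have hq1 : 1 ≤ 2 ^ a := Nat.one_le_two_pow
  have hαpow : α ^ r₁ = 1 := by
    have h1 := eig_pow ρ hα r₁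
    rw [← hox, pow_orderOf_eq_one, _root_.map_one, Matrix.one_mulVec, hox] at h1
    have := smul_cancel_ne hv0 (h1.symm.trans (one_smul K v).symm)
    exact this
  have hβpow : β ^ r₂ = 1 := by
    have h1 := eig_pow ρ hβ r₂
    rw [← hoy, pow_orderOf_eq_one, _root_.map_one, Matrix.one_mulVec, hoy] at h1
    exact smul_cancel_ne hv0 (h1.symm.trans (one_smul K v).symm)
  have hα0 : α ≠ 0 := by
    intro h; rw [h, zero_pow hr₁.ne_zero] at hαpow; exact one_ne_zero hαpow.symm
  have hβ0 : β ≠ 0 := by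
    intro h; rw [h, zero_pow hr₂.ne_zero] at hβpow; exact one_ne_zero hβpow.symm
  -- an element fixing a nonzero vector has square 1
  have sq_of_fix : ∀ g : ↥H, (∃ u : Fin 2 → K, u ≠ 0 ∧ (ρ g).mulVec u = u) → g ^ 2 = 1 := by
    rintro g ⟨u, hu0, hu⟩
    have hker1 : (ρ g - (1 : K) • 1).mulVec u = 0 := by
      rw [Matrix.sub_mulVec, Matrix.smul_mulVec, Matrix.one_mulVec, one_smul, hu, sub_self]
    have hdet1 : (ρ g - (1 : K) • 1).det = 0 :=
      Matrix.exists_mulVec_eq_zero_iff.1 ⟨u, hu0, hker1⟩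
    rw [det_sub_smul_one, hdetρ] at hdet1
    have htr : (ρ g).trace = 0 := by linear_combination hcharK - hdet1
    have hCH := ch2 (ρ g)
    rw [htr, hdetρ, zero_smul, sub_zero, one_smul] at hCH
    have hneg : ρ g * ρ g = 1 := by
      have h2 := eq_neg_of_add_eq_zero_left hCH
      rwa [CharTwo.neg_eq] at h2
    apply hinjρ
    rw [pow_two, _root_.map_mul, hneg, _root_.map_one]
  have hα1 : α ≠ 1 := by
    intro h
    have hsq := sq_of_fix x' ⟨v, hv0, show (ρ x').mulVec v = v by rw [hα, h, one_smul]⟩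
    have : r₁ ∣ 2 := by rw [← hox]; exact orderOf_dvd_of_pow_eq_one hsq
    have hr12 : r₁ = 2 := (Nat.prime_dvd_prime_iff_eq hr₁ Nat.prime_two).1 this
    rw [hr12] at h₁
    exact (Nat.not_odd_iff_even.2 even_two) h₁
  have hβ1 : β ≠ 1 := by
    intro h
    have hsq := sq_of_fix y' ⟨v, hv0, show (ρ y').mulVec v = v by rw [hβ, h, one_smul]⟩
    have : r₂ ∣ 2 := by rw [← hoy]; exact orderOf_dvd_of_pow_eq_one hsq
    have hr22 : r₂ = 2 := (Nat.prime_dvd_prime_iff_eq hr₂ Nat.prime_two).1 this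
    rw [hr22] at h₂
    exact (Nat.not_odd_iff_even.2 even_two) h₂
  -- α is fixed by the q-power Frobenius
  have hαfix : α ^ 2 ^ a = α := by
    obtain ⟨c, hc⟩ := hd₁
    have h1 : α ^ (2 ^ a - 1) = 1 := by
      rw [hc, pow_mul, hαpow, one_pow]
    calc α ^ 2 ^ a = α ^ (2 ^ a - 1) * α := by
          rw [← pow_succ]; congr 1; omega
      _ = α := by rw [h1, one_mul]
  -- entries of ρ g are fixed by Frobenius
  have hfix : ∀ (g : ↥H) i j, (ρ g i j) ^ 2 ^ a = ρ g i j := by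
    intro g i j
    rw [hρ_apply, ← map_pow, ← hF, FiniteField.pow_card]
  -- the Frobenius-conjugate vector
  set v' : Fin 2 → K := fun i => (v i) ^ 2 ^ a with hv'
  have hv'0 : v' ≠ 0 := by
    intro h
    apply hv0
    funext i
    have := congrFun h i
    simp only [hv', Pi.zero_apply] at this ⊢
    have h2 : (2 : ℕ) ^ a ≠ 0 := by positivity
    exact pow_eq_zero_iff h2 |>.1 this
  have hconj : ∀ (g : ↥H) (c : K), (ρ g).mulVec v = c • v →
      (ρ g).mulVec v' = (c ^ 2 ^ a) • v' := by
    intro g c h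
    funext i
    have hi := congrFun h i
    simp only [Matrix.mulVec, dotProduct, Fin.sum_univ_two, Pi.smul_apply,
      smul_eq_mul] at hi ⊢
    have h2 := congrArg (fun t : K => t ^ 2 ^ a) hi
    rw [add_pow_char_pow, mul_pow, mul_pow, mul_pow, hfix, hfix] at h2
    simpa [hv'] using h2
  have hαv' := hconj x' α hα
  rw [hαfix] at hαv'
  have hβv' := hconj y' β hβ
  -- the α-eigenspace of ρ x' is one-dimensional
  have hMx : ρ x' - α • 1 ≠ 0 := by
    intro h
    have h1 : ρ x' = α • (1 : Matrix (Fin 2) (Fin 2) K) := sub_eq_zero.1 h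
    have h2 : (ρ x').det = α ^ 2 := by
      rw [h1, Matrix.det_smul, Matrix.det_one, mul_one, Fintype.card_fin]
    rw [hdetρ] at h2
    have h3 : (α - 1) * (α - 1) = 0 := by linear_combination -h2 + (1 - α) * hcharK
    exact hα1 (sub_eq_zero.1 (mul_self_eq_zero.1 h3))
  have hva : (ρ x' - α • 1).mulVec v = 0 := by
    rw [Matrix.sub_mulVec, Matrix.smul_mulVec, Matrix.one_mulVec, hα, sub_self]
  have hv'a : (ρ x' - α • 1).mulVec v' = 0 := by
    rw [Matrix.sub_mulVec, Matrix.smul_mulVec, Matrix.one_mulVec, hαv', sub_self]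
  obtain ⟨c, hc⟩ := ker_par hMx hva hv'a hv0
  have hc0 : c ≠ 0 := by
    rintro rfl
    rw [zero_smul] at hc
    exact hv'0 hc
  -- β is fixed by Frobenius
  have hβfix : β ^ 2 ^ a = β := by
    have h1 : (ρ y').mulVec v' = (c * β) • v := by
      rw [hc, Matrix.mulVec_smul, hβ, smul_smul]
    have h2 : (ρ y').mulVec v' = (β ^ 2 ^ a * c) • v := by
      rw [hβv', hc, smul_smul]
    have h3 : c * β = β ^ 2 ^ a * c := smul_cancel_ne hv0 (h1.symm.trans h2)
    have h4 : β * c = β ^ 2 ^ a * c := by linear_combination h3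
    exact (mul_right_cancel₀ hc0 h4).symm
  -- conclude r₂ ∣ 2^a - 1, contradiction
  have hβq1 : β ^ (2 ^ a - 1) = 1 := by
    have h1 : β ^ (2 ^ a - 1) * β = 1 * β := by
      rw [← pow_succ, one_mul]
      calc β ^ (2 ^ a - 1 + 1) = β ^ 2 ^ a := by congr 1; omega
        _ = β := hβfix
    exact mul_right_cancel₀ hβ0 h1
  have ho1 : orderOf β ∣ r₂ := orderOf_dvd_of_pow_eq_one hβpow
  have ho2 : orderOf β ∣ 2 ^ a - 1 := orderOf_dvd_of_pow_eq_one hβq1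
  have ho3 : orderOf β = r₂ := by
    rcases (Nat.Prime.eq_one_or_self_of_dvd hr₂ _ ho1) with h | h
    · exact absurd (orderOf_eq_one_iff.1 h) hβ1
    · exact h
  rw [ho3] at ho2
  have hfinal : r₂ ∣ 2 := by
    have := Nat.dvd_sub hd₂ ho2
    have he : 2 ^ a + 1 - (2 ^ a - 1) = 2 := by omega
    rwa [he] at this
  have hr22 : r₂ = 2 := (Nat.prime_dvd_prime_iff_eq hr₂ Nat.prime_two).1 hfinal
  rw [hr22] at h₂
  exact (Nat.not_odd_iff_even.2 even_two) h₂
end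

section
/- Let q ≥ 7 be a Mersenne prime, i.e., q is prime and q = 2^a − 1 for some integer a. Let G = SL(2, F_q) be the special linear group of 2 × 2 matrices of determinant 1 over the field F_q with q elements. Then for all x, y ∈ G with the order of x equal to q and the order of y equal to 4, the subgroup ⟨x, y⟩ equals G. -/
open Matrix

namespace SL2Aux

variable {F : Type*} [Field F]

/-- cross product of two vectors in F² -/
def cross (a b : Fin 2 → F) : F := a 0 * b 1 - a 1 * b 0

lemma cross_mulVec (M : Matrix (Fin 2) (Fin 2) F) (a b : Fin 2 → F) :
    cross (M.mulVec a) (M.mulVec b) = M.det * cross a b := by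
  simp [cross, Matrix.mulVec, dotProduct, Fin.sum_univ_two, Matrix.det_fin_two]
  ring

lemma exists_smul_of_cross_eq_zero {v u : Fin 2 → F} (hv : v ≠ 0)
    (h : cross v u = 0) : ∃ lam : F, u = lam • v := by
  have h' : v 0 * u 1 = v 1 * u 0 := by
    have := h; unfold cross at this; linear_combination this
  rcases eq_or_ne (v 0) 0 with h0 | h0
  · have h1 : v 1 ≠ 0 := by
      intro h1; apply hv; funext i; fin_cases i <;> simp [h0, h1]
    refine ⟨u 1 / v 1, ?_⟩
    funext i; fin_cases i
    · have hu0 : u 0 = 0 := by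
        have : v 1 * u 0 = 0 := by rw [← h', h0, zero_mul]
        exact (mul_eq_zero.mp this).resolve_left h1
      simp [Pi.smul_apply, h0, hu0]
    · simp [Pi.smul_apply]; field_simp
  · refine ⟨u 0 / v 0, ?_⟩
    funext i; fin_cases i
    · simp [Pi.smul_apply]; field_simp
    · simp [Pi.smul_apply]
      field_simp
      linear_combination h'

/-- a 2×2 matrix killing a basis is zero -/
lemma killer {M : Matrix (Fin 2) (Fin 2) F} {v u : Fin 2 → F}
    (hd : cross v u ≠ 0) (h1 : M.mulVec v = 0) (h2 : M.mulVec u = 0) : M = 0 := by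
  set B : Matrix (Fin 2) (Fin 2) F := !![v 0, u 0; v 1, u 1] with hB
  have hdet : B.det = cross v u := by
    simp [hB, Matrix.det_fin_two_of, cross]
    ring
  have hU : IsUnit B.det := by rw [hdet]; exact isUnit_iff_ne_zero.mpr hd
  have hMB : M * B = 0 := by
    ext i j
    fin_cases j
    · simpa [hB, Matrix.mul_apply, Matrix.mulVec, dotProduct, Fin.sum_univ_two]
        using congrFun h1 i
    · simpa [hB, Matrix.mul_apply, Matrix.mulVec, dotProduct, Fin.sum_univ_two]
        using congrFun h2 i
  calc M = M * (B * B⁻¹) := by rw [Matrix.mul_nonsing_inv B hU, mul_one]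
    _ = (M * B) * B⁻¹ := by rw [mul_assoc]
    _ = 0 := by rw [hMB, zero_mul]

/-- multiplication acts column-wise -/
lemma mul_col_eq (M : Matrix (Fin 2) (Fin 2) F) (a b c d : Fin 2 → F)
    (h1 : M.mulVec a = c) (h2 : M.mulVec b = d) :
    M * !![a 0, b 0; a 1, b 1] = !![c 0, d 0; c 1, d 1] := by
  ext i j
  fin_cases i <;> fin_cases j
  · simpa [Matrix.mul_apply, Matrix.mulVec, dotProduct, Fin.sum_univ_two]
      using congrFun h1 0
  · simpa [Matrix.mul_apply, Matrix.mulVec, dotProduct, Fin.sum_univ_two]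
      using congrFun h2 0
  · simpa [Matrix.mul_apply, Matrix.mulVec, dotProduct, Fin.sum_univ_two]
      using congrFun h1 1
  · simpa [Matrix.mul_apply, Matrix.mulVec, dotProduct, Fin.sum_univ_two]
      using congrFun h2 1

def uu (t : F) : SpecialLinearGroup (Fin 2) F :=
  ⟨!![1, t; 0, 1], by simp [Matrix.det_fin_two_of]⟩

def ll (t : F) : SpecialLinearGroup (Fin 2) F :=
  ⟨!![1, 0; t, 1], by simp [Matrix.det_fin_two_of]⟩

lemma uu_zero : uu (0 : F) = 1 := by
  apply Subtype.ext; simp [uu, ← Matrix.one_fin_two]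

lemma ll_zero : ll (0 : F) = 1 := by
  apply Subtype.ext; simp [ll, ← Matrix.one_fin_two]

lemma uu_mul (s t : F) : uu s * uu t = uu (s + t) := by
  apply Subtype.ext
  simp only [Matrix.SpecialLinearGroup.coe_mul]
  simp [uu, Matrix.mul_fin_two]
  ring

lemma ll_mul (s t : F) : ll s * ll t = ll (s + t) := by
  apply Subtype.ext
  simp only [Matrix.SpecialLinearGroup.coe_mul]
  simp [ll, Matrix.mul_fin_two]

lemma uu_pow (t : F) (n : ℕ) : uu t ^ n = uu (n * t) := by
  induction n with
  | zero => simp [uu_zero]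
  | succ n ih => rw [pow_succ, ih, uu_mul]; push_cast; ring_nf

lemma ll_pow (t : F) (n : ℕ) : ll t ^ n = ll (n * t) := by
  induction n with
  | zero => simp [ll_zero]
  | succ n ih => rw [pow_succ, ih, ll_mul]; push_cast; ring_nf

/-- decomposition of an SL2 matrix with nonzero lower-left entry -/
lemma decomp (A : SpecialLinearGroup (Fin 2) F) (hc : A.1 1 0 ≠ 0) :
    A = uu ((A.1 0 0 - 1) / A.1 1 0) * ll (A.1 1 0) * uu ((A.1 1 1 - 1) / A.1 1 0) := by
  have hdet : A.1 0 0 * A.1 1 1 - A.1 0 1 * A.1 1 0 = 1 := by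
    have := A.2; rwa [Matrix.det_fin_two] at this
  apply Subtype.ext
  simp only [Matrix.SpecialLinearGroup.coe_mul]
  simp only [uu, ll, Matrix.mul_fin_two]
  rw [Matrix.eta_fin_two A.1]
  ext i j
  fin_cases i <;> fin_cases j
  · simp [Matrix.cons_val_zero, Matrix.cons_val_one] <;> field_simp <;> ring
  · simp [Matrix.cons_val_zero, Matrix.cons_val_one] <;> field_simp <;> linear_combination -hdet
  · simp [Matrix.cons_val_zero, Matrix.cons_val_one] <;> field_simp <;> linear_combination -hdet
  · simp [Matrix.cons_val_zero, Matrix.cons_val_one] <;> field_simp <;> ring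

/-- generation lemma: a subgroup containing all uu t and ll t is everything -/
lemma closure_uu_ll (H : Subgroup (SpecialLinearGroup (Fin 2) F))
    (hu : ∀ t : F, uu t ∈ H) (hl : ∀ t : F, ll t ∈ H) : H = ⊤ := by
  rw [Subgroup.eq_top_iff']
  have key : ∀ A : SpecialLinearGroup (Fin 2) F, A.1 1 0 ≠ 0 → A ∈ H := by
    intro A hc
    rw [decomp A hc]
    exact H.mul_mem (H.mul_mem (hu _) (hl _)) (hu _)
  intro A
  rcases eq_or_ne (A.1 1 0) 0 with h0 | h0
  · have h11 : A.1 1 1 ≠ 0 := by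
      intro h11
      have := A.2
      rw [Matrix.det_fin_two, h0, h11] at this
      simp at this
    have hA' : (A * ll 1).1 1 0 ≠ 0 := by
      simp only [Matrix.SpecialLinearGroup.coe_mul]
      simp [ll]
      rw [Matrix.eta_fin_two A.1, Matrix.mul_fin_two]
      simpa [h0] using h11
    have : A * ll 1 ∈ H := key _ hA'
    have h2 : A = (A * ll 1) * ll (-1) := by
      rw [mul_assoc, ll_mul]; simp [ll_zero]
    rw [h2]
    exact H.mul_mem this (hl _)
  · exact key A h0

/-- Cayley–Hamilton for 2×2 matrices -/
lemma ch (M : Matrix (Fin 2) (Fin 2) F) :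
    M * M = (M 0 0 + M 1 1) • M - M.det • 1 := by
  ext i j
  fin_cases i <;> fin_cases j <;>
    simp [Matrix.mul_apply, Fin.sum_univ_two, Matrix.det_fin_two, Matrix.one_apply] <;> ring

/-- the unique elements of order dividing 2 in SL(2,F), char F ≠ 2, are ±1 -/
lemma sq_eq_one (htwo : (2 : F) ≠ 0) (z : SpecialLinearGroup (Fin 2) F)
    (hz : z * z = 1) : z = 1 ∨ z = -1 := by
  have hdet : z.1 0 0 * z.1 1 1 - z.1 0 1 * z.1 1 0 = 1 := by
    have := z.2; rwa [Matrix.det_fin_two] at this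
  have hm : z.1 * z.1 = 1 := by
    have := congrArg (Subtype.val) hz
    simpa using this
  have e00 : z.1 0 0 * z.1 0 0 + z.1 0 1 * z.1 1 0 = 1 := by
    have := congrFun (congrFun hm 0) 0
    simpa [Matrix.mul_apply, Fin.sum_univ_two, Matrix.one_apply] using this
  have e01 : z.1 0 0 * z.1 0 1 + z.1 0 1 * z.1 1 1 = 0 := by
    have := congrFun (congrFun hm 0) 1
    simpa [Matrix.mul_apply, Fin.sum_univ_two, Matrix.one_apply] using this
  have e10 : z.1 1 0 * z.1 0 0 + z.1 1 1 * z.1 1 0 = 0 := by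
    have := congrFun (congrFun hm 1) 0
    simpa [Matrix.mul_apply, Fin.sum_univ_two, Matrix.one_apply] using this
  rcases eq_or_ne (z.1 0 0 + z.1 1 1) 0 with h0 | h0
  · exfalso
    apply htwo
    have hd : z.1 1 1 = -z.1 0 0 := by linear_combination h0
    linear_combination -e00 - hdet + z.1 0 0 * hd
  · have hb : z.1 0 1 = 0 := by
      have : z.1 0 1 * (z.1 0 0 + z.1 1 1) = 0 := by linear_combination e01
      exact (mul_eq_zero.mp this).resolve_right h0
    have hc : z.1 1 0 = 0 := by
      have : z.1 1 0 * (z.1 0 0 + z.1 1 1) = 0 := by linear_combination e10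
      exact (mul_eq_zero.mp this).resolve_right h0
    have ha : z.1 0 0 * z.1 0 0 = 1 := by rw [hb, hc] at e00; simpa using e00
    have had : z.1 0 0 * z.1 1 1 = 1 := by rw [hb, hc] at hdet; simpa using hdet
    have hd : z.1 1 1 = z.1 0 0 := by
      linear_combination z.1 0 0 * had - z.1 1 1 * ha
    have : z.1 0 0 = 1 ∨ z.1 0 0 = -1 := by
      rcases mul_eq_zero.mp
          (show (z.1 0 0 - 1) * (z.1 0 0 + 1) = 0 by linear_combination ha) with h | h
      · left; linear_combination h
      · right; linear_combination h
    rcases this with h | h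
    · left
      apply Matrix.SpecialLinearGroup.ext
      intro i j
      fin_cases i <;> fin_cases j <;>
        simp [Matrix.SpecialLinearGroup.coe_one, Matrix.one_apply, hb, hc, hd, h]
    · right
      apply Matrix.SpecialLinearGroup.ext
      intro i j
      fin_cases i <;> fin_cases j <;>
        simp [Matrix.SpecialLinearGroup.coe_neg, Matrix.SpecialLinearGroup.coe_one,
          Matrix.one_apply, hb, hc, hd, h]

/-- an element of order q = char is unipotent with (x-1)² = 0 -/
lemma unip (q : ℕ) [Fact q.Prime] (h7 : 7 ≤ q)
    (x : SpecialLinearGroup (Fin 2) (ZMod q)) (hx : orderOf x = q) :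
    (x.1 - 1) * (x.1 - 1) = 0 ∧ x.1 - 1 ≠ 0 := by
  set N : Matrix (Fin 2) (Fin 2) (ZMod q) := x.1 - 1 with hN
  have hNne : N ≠ 0 := by
    intro h
    have : x = 1 := Subtype.ext (sub_eq_zero.mp h)
    rw [this, orderOf_one] at hx
    omega
  have hxq : x ^ q = 1 := by
    have := pow_orderOf_eq_one x
    rwa [hx] at this
  have hmq : x.1 ^ q = 1 := by
    have := congrArg (Subtype.val) hxq
    simpa [Matrix.SpecialLinearGroup.coe_pow] using this
  have hNq : N ^ q = 0 := by
    have hcomm : Commute (1 : Matrix (Fin 2) (Fin 2) (ZMod q)) N := Commute.one_left N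
    have h1 : x.1 = 1 + N := by rw [hN]; noncomm_ring
    have := add_pow_char_of_commute (R := Matrix (Fin 2) (Fin 2) (ZMod q)) (p := q) hcomm
    rw [← h1, one_pow] at this
    rw [hmq] at this
    exact (left_eq_add.mp this)
  have hdetN : N.det = 0 := by
    have h0 : N.det ^ q = 0 := by
      rw [← Matrix.det_pow, hNq]
      simp
    exact (pow_eq_zero_iff (by omega : q ≠ 0)).mp h0
  have hch : N * N = (N 0 0 + N 1 1) • N := by
    rw [ch N, hdetN, zero_smul, sub_zero]
  set t : ZMod q := N 0 0 + N 1 1 with htdef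
  have hpow : ∀ k : ℕ, N ^ (k + 1) = t ^ k • N := by
    intro k
    induction k with
    | zero => simp
    | succ k ih =>
      rw [pow_succ, ih, smul_mul_assoc, hch, smul_smul, pow_succ]
  have ht : t = 0 := by
    have hq1 : q - 1 + 1 = q := by omega
    have h0 : t ^ (q - 1) • N = 0 := by rw [← hpow, hq1, hNq]
    by_contra htne
    apply hNne
    have : (t ^ (q - 1))⁻¹ • (t ^ (q - 1) • N) = 0 := by rw [h0, smul_zero]
    rwa [smul_smul, inv_mul_cancel₀ (pow_ne_zero _ htne), one_smul] at this
  refine ⟨?_, hNne⟩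
  rw [hch, ht, zero_smul]

end SL2Aux

open SL2Aux

/-- For `G = SL₂(q)` with `q ≥ 7` a Mersenne prime: for all `x, y ∈ G` with `|x| = q`
and `|y| = 4`, we have `⟨x, y⟩ = G`. -/
theorem stmt_13 (q : ℕ) (hq : q.Prime) (h7 : 7 ≤ q) (hM : ∃ a : ℕ, q = 2 ^ a - 1) :
    ∀ x y : Matrix.SpecialLinearGroup (Fin 2) (ZMod q),
      orderOf x = q → orderOf y = 4 →
        Subgroup.closure {x, y} = ⊤ := by
  haveI := Fact.mk hq
  intro x y hx hy
  -- arithmetic facts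
  have hq4 : q % 4 = 3 := by
    obtain ⟨a, ha⟩ := hM
    have ha3 : 3 ≤ a := by
      by_contra h
      push_neg at h
      interval_cases a <;> omega
    have h4dvd : 2 ^ a = 4 * 2 ^ (a - 2) := by
      have : a = 2 + (a - 2) := by omega
      rw [this, pow_add]
      norm_num
    omega
  have htwo : (2 : ZMod q) ≠ 0 := by
    intro h
    have h2 : ((2 : ℕ) : ZMod q) = 0 := by exact_mod_cast h
    rw [ZMod.natCast_eq_zero_iff] at h2
    have := Nat.le_of_dvd (by norm_num) h2
    omega
  -- y² = -1
  have hysq : y * y = -1 := by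
    have h4 : (y * y) * (y * y) = 1 := by
      have := pow_orderOf_eq_one y
      rw [hy] at this
      simpa [pow_succ, mul_assoc] using this
    rcases sq_eq_one htwo (y * y) h4 with h | h
    · exfalso
      have : orderOf y ∣ 2 := orderOf_dvd_of_pow_eq_one (by rw [pow_two]; exact h)
      rw [hy] at this
      omega
    · exact h
  have hysqm : y.1 * y.1 = -(1 : Matrix (Fin 2) (Fin 2) (ZMod q)) := by
    have := congrArg (Subtype.val) hysq
    simpa [Matrix.SpecialLinearGroup.coe_neg, Matrix.SpecialLinearGroup.coe_one] using this
  -- y has no eigenvector over ZMod q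
  have noeig : ∀ (lam : ZMod q) (v : Fin 2 → ZMod q), v ≠ 0 →
      y.1.mulVec v = lam • v → False := by
    intro lam v hv heig
    have h1 : y.1.mulVec (y.1.mulVec v) = (lam * lam) • v := by
      rw [heig, Matrix.mulVec_smul, heig, smul_smul]
    rw [Matrix.mulVec_mulVec, hysqm] at h1
    have h2 : -v = (lam * lam) • v := by
      rw [← h1, Matrix.neg_mulVec, Matrix.one_mulVec]
    obtain ⟨i, hi⟩ : ∃ i, v i ≠ 0 := by
      by_contra h
      push_neg at h
      exact hv (funext h)
    have h3 : -(v i) = (lam * lam) * v i := congrFun h2 i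
    have hlam : lam * lam = -1 := by
      have : (lam * lam + 1) * v i = 0 := by linear_combination -h3
      have := (mul_eq_zero.mp this).resolve_right hi
      linear_combination this
    have : IsSquare (-1 : ZMod q) := ⟨lam, hlam.symm⟩
    exact (ZMod.exists_sq_eq_neg_one_iff.mp this) hq4
  -- unipotent structure of x
  obtain ⟨hN2, hNne⟩ := unip q h7 x hx
  set N : Matrix (Fin 2) (Fin 2) (ZMod q) := x.1 - 1 with hNdef
  have hdetN : N.det = 0 := by
    have h0 : N.det * N.det = 0 := by rw [← Matrix.det_mul, hN2]; simp
    exact mul_self_eq_zero.mp h0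
  -- a vector w with N w ≠ 0, put v := N w
  obtain ⟨i0, j0, hij⟩ : ∃ i j, N i j ≠ 0 := by
    by_contra h
    push_neg at h
    exact hNne (by ext i j; simpa using h i j)
  set w : Fin 2 → ZMod q := Pi.single j0 1 with hwdef
  set v : Fin 2 → ZMod q := N.mulVec w with hvdef
  have hvne : v ≠ 0 := by
    intro h
    apply hij
    have : v i0 = 0 := by rw [h]; rfl
    rw [hvdef] at this
    simpa [Matrix.mulVec_single, hwdef] using this
  have hNv : N.mulVec v = 0 := by
    rw [hvdef, Matrix.mulVec_mulVec, hN2, Matrix.zero_mulVec]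
  have hxv : x.1.mulVec v = v := by
    have : x.1 = N + 1 := by rw [hNdef]; noncomm_ring
    rw [this, Matrix.add_mulVec, hNv, Matrix.one_mulVec, zero_add]
  -- u := y v is not proportional to v
  set u : Fin 2 → ZMod q := y.1.mulVec v with hudef
  have hune : u ≠ 0 := by
    intro h
    apply hvne
    have h1 : (y⁻¹).1.mulVec u = v := by
      rw [hudef, Matrix.mulVec_mulVec, ← Matrix.SpecialLinearGroup.coe_mul, inv_mul_cancel,
        Matrix.SpecialLinearGroup.coe_one, Matrix.one_mulVec]
    rw [h, Matrix.mulVec_zero] at h1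
    exact h1.symm
  set d : ZMod q := cross v u with hddef
  have hdne : d ≠ 0 := by
    intro h
    obtain ⟨lam, hlam⟩ := exists_smul_of_cross_eq_zero hvne h
    exact noeig lam v hvne (by rw [← hudef, hlam])
  -- the change-of-basis matrix g with columns v, d⁻¹ u
  set u' : Fin 2 → ZMod q := d⁻¹ • u with hu'def
  have hdetg : Matrix.det !![v 0, u' 0; v 1, u' 1] = 1 := by
    simp only [Matrix.det_fin_two_of, hu'def, Pi.smul_apply, smul_eq_mul]
    have : d⁻¹ * d = 1 := inv_mul_cancel₀ hdne
    calc v 0 * (d⁻¹ * u 1) - d⁻¹ * u 0 * v 1 = d⁻¹ * (v 0 * u 1 - v 1 * u 0) := by ring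
      _ = d⁻¹ * d := by rw [hddef]; rfl
      _ = 1 := this
  set g : Matrix.SpecialLinearGroup (Fin 2) (ZMod q) := ⟨_, hdetg⟩ with hgdef
  -- N u' = μ • v with μ ≠ 0
  have hcrossNu' : cross v (N.mulVec u') = 0 := by
    rw [hvdef, cross_mulVec, hdetN, zero_mul]
  obtain ⟨mu, hmu⟩ := exists_smul_of_cross_eq_zero hvne hcrossNu'
  have hmune : mu ≠ 0 := by
    intro h
    rw [h, zero_smul] at hmu
    have hN0 : N = 0 := killer (by rw [← hddef]; exact hdne) hNv (by
      rw [hu'def] at hmu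
      have : d • (N.mulVec (d⁻¹ • u)) = 0 := by rw [hmu, smul_zero]
      rwa [Matrix.mulVec_smul, smul_smul, mul_inv_cancel₀ hdne, one_smul] at this)
    exact hNne hN0
  have hxu' : x.1.mulVec u' = u' + mu • v := by
    have hx1 : x.1 = N + 1 := by rw [hNdef]; noncomm_ring
    rw [hx1, Matrix.add_mulVec, hmu, Matrix.one_mulVec, add_comm]
  -- the conjugate unipotent x' = y x y⁻¹, with N' = y N y⁻¹
  set x' : Matrix.SpecialLinearGroup (Fin 2) (ZMod q) := y * x * y⁻¹ with hx'def
  set N' : Matrix (Fin 2) (Fin 2) (ZMod q) := y.1 * N * (y⁻¹).1 with hN'def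
  have hyinvy : (y⁻¹).1 * y.1 = 1 := by
    rw [← Matrix.SpecialLinearGroup.coe_mul, inv_mul_cancel, Matrix.SpecialLinearGroup.coe_one]
  have hyyinv : y.1 * (y⁻¹).1 = 1 := by
    rw [← Matrix.SpecialLinearGroup.coe_mul, mul_inv_cancel, Matrix.SpecialLinearGroup.coe_one]
  have hx'm : x'.1 = N' + 1 := by
    have e : y.1 * (x.1 - 1) * (y⁻¹).1 = y.1 * x.1 * (y⁻¹).1 - y.1 * (y⁻¹).1 := by
      noncomm_ring
    rw [hx'def, hN'def, hNdef]
    simp only [Matrix.SpecialLinearGroup.coe_mul]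
    rw [e, hyyinv]
    noncomm_ring
  haveI : NeZero q := ⟨by omega⟩
  have hdetN' : N'.det = 0 := by
    rw [hN'def, Matrix.det_mul, Matrix.det_mul, hdetN]
    ring
  have hN'u : N'.mulVec u = 0 := by
    rw [hudef, hN'def, Matrix.mulVec_mulVec]
    have e : y.1 * N * (y⁻¹).1 * y.1 = y.1 * N := by
      rw [mul_assoc, hyinvy, mul_one]
    rw [e, ← Matrix.mulVec_mulVec, hNv, Matrix.mulVec_zero]
  have hu_im : N'.mulVec (y.1.mulVec w) = u := by
    rw [hN'def, Matrix.mulVec_mulVec]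
    have e : y.1 * N * (y⁻¹).1 * y.1 = y.1 * N := by
      rw [mul_assoc, hyinvy, mul_one]
    rw [e, ← Matrix.mulVec_mulVec, ← hvdef, ← hudef]
  have hcrossN'v : cross u (N'.mulVec v) = 0 := by
    rw [← hu_im, cross_mulVec, hdetN', zero_mul]
  obtain ⟨nu, hnu⟩ := exists_smul_of_cross_eq_zero hune hcrossN'v
  have hnune : nu ≠ 0 := by
    intro h
    rw [h, zero_smul] at hnu
    have hN'0 : N' = 0 := by
      apply killer (v := u) (u := v) _ hN'u hnu
      intro hcu
      apply hdne
      rw [hddef]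
      unfold SL2Aux.cross at hcu ⊢
      linear_combination -hcu
    apply hNne
    have : (y⁻¹).1 * N' * y.1 = N := by
      rw [hN'def]
      calc (y⁻¹).1 * (y.1 * N * (y⁻¹).1) * y.1
          = ((y⁻¹).1 * y.1) * N * ((y⁻¹).1 * y.1) := by noncomm_ring
        _ = N := by rw [hyinvy, one_mul, mul_one]
    rw [← this, hN'0, Matrix.mul_zero, Matrix.zero_mul]
  have hu'u : d • u' = u := by
    rw [hu'def, smul_smul, mul_inv_cancel₀ hdne, one_smul]
  have hN'u' : N'.mulVec u' = 0 := by
    rw [hu'def, Matrix.mulVec_smul, hN'u, smul_zero]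
  have hx'v : x'.1.mulVec v = v + (nu * d) • u' := by
    rw [hx'm, Matrix.add_mulVec, hnu, Matrix.one_mulVec]
    rw [← hu'u, smul_smul]
    abel
  have hx'u' : x'.1.mulVec u' = u' := by
    rw [hx'm, Matrix.add_mulVec, hN'u', Matrix.one_mulVec, zero_add]
  -- conjugation identities at the SL level
  have hgcoe : g.1 = !![v 0, u' 0; v 1, u' 1] := rfl
  have key1 : x * g = g * uu mu := by
    apply Subtype.ext
    rw [show (x * g).1 = x.1 * g.1 from rfl, hgcoe,
      mul_col_eq x.1 v u' v (u' + mu • v) hxv hxu',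
      show (g * uu mu).1 = g.1 * (uu mu).1 from rfl, hgcoe,
      show (uu mu).1 = !![1, mu; 0, 1] from rfl, Matrix.mul_fin_two]
    ext i j
    fin_cases i <;> fin_cases j <;> simp [Pi.smul_apply] <;> ring
  have key2 : x' * g = g * ll (nu * d) := by
    apply Subtype.ext
    rw [show (x' * g).1 = x'.1 * g.1 from rfl, hgcoe,
      mul_col_eq x'.1 v u' (v + (nu * d) • u') u' hx'v hx'u',
      show (g * ll (nu * d)).1 = g.1 * (ll (nu * d)).1 from rfl, hgcoe,
      show (ll (nu * d)).1 = !![1, 0; nu * d, 1] from rfl, Matrix.mul_fin_two]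
    ext i j
    fin_cases i <;> fin_cases j <;> simp [Pi.smul_apply] <;> ring
  have xeq : x = g * uu mu * g⁻¹ := by
    rw [← key1, mul_assoc, mul_inv_cancel, mul_one]
  have x'eq : x' = g * ll (nu * d) * g⁻¹ := by
    rw [← key2, mul_assoc, mul_inv_cancel, mul_one]
  -- the closure contains x and x' = y x y⁻¹
  set H : Subgroup (Matrix.SpecialLinearGroup (Fin 2) (ZMod q)) := Subgroup.closure {x, y}
    with hHdef
  have hxH : x ∈ H := Subgroup.subset_closure (Set.mem_insert _ _)
  have hyH : y ∈ H := Subgroup.subset_closure (Set.mem_insert_of_mem _ rfl)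
  have hx'H : x' ∈ H := by
    rw [hx'def]
    exact H.mul_mem (H.mul_mem hyH hxH) (H.inv_mem hyH)
  -- pull back along conjugation by g
  set K : Subgroup (Matrix.SpecialLinearGroup (Fin 2) (ZMod q)) :=
    Subgroup.comap (MulAut.conj g).toMonoidHom H with hKdef
  have hmemK : ∀ b, b ∈ K ↔ g * b * g⁻¹ ∈ H := by
    intro b
    rw [hKdef, Subgroup.mem_comap]
    simp [MulAut.conj_apply]
  have huuK : uu mu ∈ K := by
    rw [hmemK, ← xeq]; exact hxH
  have hllK : ll (nu * d) ∈ K := by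
    rw [hmemK, ← x'eq]; exact hx'H
  have hscale : ∀ c : ZMod q, c ≠ 0 → ∀ t : ZMod q, ∃ n : ℕ, (n : ZMod q) * c = t := by
    intro c hc t
    refine ⟨(t * c⁻¹).val, ?_⟩
    rw [ZMod.natCast_val, ZMod.cast_id]
    field_simp
  have huuAll : ∀ t : ZMod q, uu t ∈ K := by
    intro t
    obtain ⟨n, hn⟩ := hscale mu hmune t
    rw [← hn, ← uu_pow]
    exact K.pow_mem huuK n
  have hllAll : ∀ t : ZMod q, ll t ∈ K := by
    intro t
    obtain ⟨n, hn⟩ := hscale (nu * d) (mul_ne_zero hnune hdne) t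
    rw [← hn, ← ll_pow]
    exact K.pow_mem hllK n
  have hKtop : K = ⊤ := closure_uu_ll K huuAll hllAll
  rw [Subgroup.eq_top_iff']
  intro A
  have hA : g⁻¹ * A * g ∈ K := by rw [hKtop]; trivial
  rw [hmemK] at hA
  have e : g * (g⁻¹ * A * g) * g⁻¹ = A := by group
  rwa [e] at hA
end
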